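/- arXiv:1602.07751 — 3 statements merged into one kernel-verified Lean document; each statement's English description precedes it below -/
import Mathlib

section
/- Suppose 𝒜 is the smallest field of sets on Ω containing 𝒜_ℒ ∪ 𝒜_ℰ. Then for every statistical model λ on 𝒜_ℰ × ℒ there exists exactly one strategy σ on 𝒜 × ℒ whose restriction to 𝒜_ℰ × ℒ equals λ. -/
open Set

open scoped Classical

variable {Ω : Type*}

/-- A field of sets on `Ω`: contains `univ`, closed under complements and finite unions. -/
def IsSetField (𝒜 : Set (Set Ω)) : Prop :=
  Set.univ ∈ 𝒜 ∧ (∀ A ∈ 𝒜, Aᶜ ∈ 𝒜) ∧ ∀ A ∈ 𝒜, ∀ B ∈ 𝒜, A ∪ B ∈ 𝒜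

/-- A finitely additive probability on the field `𝒜`. -/
def IsFAP (𝒜 : Set (Set Ω)) (P : Set Ω → ℝ) : Prop :=
  (∀ A ∈ 𝒜, 0 ≤ P A ∧ P A ≤ 1) ∧ P Set.univ = 1 ∧
    ∀ A ∈ 𝒜, ∀ B ∈ 𝒜, Disjoint A B → P (A ∪ B) = P A + P B

/-- A partition of `Ω` into nonempty pairwise disjoint pieces. -/
def IsPartition {ι : Type*} (H : ι → Set Ω) : Prop :=
  (∀ i, (H i).Nonempty) ∧ (Pairwise fun i j => Disjoint (H i) (H j)) ∧
    (⋃ i, H i) = Set.univ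

/-- A field containing every member of the partition `H` and whose members are
unions of members of the partition. -/
def IsFieldOver {ι : Type*} (H : ι → Set Ω) (𝒜L : Set (Set Ω)) : Prop :=
  IsSetField 𝒜L ∧ (∀ i, H i ∈ 𝒜L) ∧ ∀ A ∈ 𝒜L, ∃ S : Set ι, A = ⋃ i ∈ S, H i

/-- A field containing `𝒜L ∪ 𝒜E` whose members are unions of the atoms `H i ∩ E j`. -/
def IsJointField {ι κ : Type*} (H : ι → Set Ω) (E : κ → Set Ω)
    (𝒜L 𝒜E 𝒜 : Set (Set Ω)) : Prop :=
  IsSetField 𝒜 ∧ 𝒜L ⊆ 𝒜 ∧ 𝒜E ⊆ 𝒜 ∧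
    ∀ A ∈ 𝒜, ∃ S : Set (ι × κ), A = ⋃ p ∈ S, H p.1 ∩ E p.2

/-- A strategy on `𝒜 × ℒ`: each `σ (·|H i)` is a finitely additive probability on `𝒜`
equal to `1` on events implied by `H i`. -/
def IsStrategy {ι : Type*} (𝒜 : Set (Set Ω)) (H : ι → Set Ω) (σ : Set Ω → ι → ℝ) : Prop :=
  ∀ i, IsFAP 𝒜 (fun F => σ F i) ∧ ∀ F ∈ 𝒜, H i ⊆ F → σ F i = 1

/-- A full conditional probability on the field `𝒜` (conditions (C1), (C2), (C3)). -/
def IsFCP (𝒜 : Set (Set Ω)) (P : Set Ω → Set Ω → ℝ) : Prop :=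
  (∀ E ∈ 𝒜, ∀ K ∈ 𝒜, K.Nonempty → P E K = P (E ∩ K) K) ∧
  (∀ K ∈ 𝒜, K.Nonempty → IsFAP 𝒜 fun E => P E K) ∧
  ∀ E ∈ 𝒜, ∀ F ∈ 𝒜, ∀ K ∈ 𝒜, K.Nonempty → (E ∩ K).Nonempty →
    P (E ∩ F) K = P E K * P F (E ∩ K)

/-- `P` extends the prior `π` on `𝒜L` and the strategy `σ` on `𝒜 × ℒ`. -/
def ExtendsPriorStrategy {ι : Type*} (𝒜 𝒜L : Set (Set Ω)) (H : ι → Set Ω)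
    (π : Set Ω → ℝ) (σ : Set Ω → ι → ℝ) (P : Set Ω → Set Ω → ℝ) : Prop :=
  (∀ B ∈ 𝒜L, P B Set.univ = π B) ∧ ∀ F ∈ 𝒜, ∀ i, P F (H i) = σ F i

/-- The set `𝒫` of full conditional probabilities on `𝒜` extending `{π, σ}`. -/
def FCPSet {ι : Type*} (𝒜 𝒜L : Set (Set Ω)) (H : ι → Set Ω)
    (π : Set Ω → ℝ) (σ : Set Ω → ι → ℝ) : Set (Set Ω → Set Ω → ℝ) :=
  {P | IsFCP 𝒜 P ∧ ExtendsPriorStrategy 𝒜 𝒜L H π σ P}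

/-- Lower envelope of a set of conditional probabilities at `F|K`. -/
noncomputable def lowEnv (Ps : Set (Set Ω → Set Ω → ℝ)) (F K : Set Ω) : ℝ :=
  sInf ((fun P => P F K) '' Ps)

/-- Upper envelope of a set of conditional probabilities at `F|K`. -/
noncomputable def upEnv (Ps : Set (Set Ω → Set Ω → ℝ)) (F K : Set Ω) : ℝ :=
  sSup ((fun P => P F K) '' Ps)

/-- A finite partition of `Ω` contained in `𝒜L`. -/
def IsFinPart (𝒜L : Set (Set Ω)) (T : Finset (Set Ω)) : Prop :=
  (↑T : Set (Set Ω)) ⊆ 𝒜L ∧ (∀ A ∈ T, (A : Set Ω).Nonempty) ∧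
    (∀ A ∈ T, ∀ B ∈ T, A ≠ B → Disjoint A B) ∧ ⋃₀ (↑T : Set (Set Ω)) = Set.univ

/-- Lower Stieltjes integral of `X : ℒ → ℝ` with respect to `μ` on `𝒜L`. -/
noncomputable def lowerSInt {ι : Type*} (H : ι → Set Ω) (𝒜L : Set (Set Ω))
    (X : ι → ℝ) (μ : Set Ω → ℝ) : ℝ :=
  sSup {x | ∃ T : Finset (Set Ω), IsFinPart 𝒜L T ∧
    x = ∑ A ∈ T, sInf {y | ∃ i, H i ⊆ A ∧ y = X i} * μ A}

/-- Upper Stieltjes integral of `X : ℒ → ℝ` with respect to `μ` on `𝒜L`. -/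
noncomputable def upperSInt {ι : Type*} (H : ι → Set Ω) (𝒜L : Set (Set Ω))
    (X : ι → ℝ) (μ : Set Ω → ℝ) : ℝ :=
  sInf {x | ∃ T : Finset (Set Ω), IsFinPart 𝒜L T ∧
    x = ∑ A ∈ T, sSup {y | ∃ i, H i ⊆ A ∧ y = X i} * μ A}

/-- `𝒜L`-continuity of a bounded function `X : ℒ → ℝ`. -/
def ALContinuous {ι : Type*} (H : ι → Set Ω) (𝒜L : Set (Set Ω)) (X : ι → ℝ) : Prop :=
  (∃ M : ℝ, ∀ i, |X i| ≤ M) ∧ ∀ t : ℝ, ∀ ε > (0 : ℝ), ∃ A ∈ 𝒜L,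
    (⋃ i ∈ {i | t + ε ≤ X i}, H i) ⊆ A ∧ A ⊆ ⋃ i ∈ {i | t ≤ X i}, H i

/-- Countable additivity of `P` on the field `𝒜`. -/
def CountablyAdditiveOn (𝒜 : Set (Set Ω)) (P : Set Ω → ℝ) : Prop :=
  ∀ A : ℕ → Set Ω, (∀ n, A n ∈ 𝒜) → (Pairwise fun m n => Disjoint (A m) (A n)) →
    (⋃ n, A n) ∈ 𝒜 → HasSum (fun n => P (A n)) (P (⋃ n, A n))

/-- A (normalized) capacity on the field `𝒜`. -/
def IsCapacity (𝒜 : Set (Set Ω)) (φ : Set Ω → ℝ) : Prop :=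
  φ ∅ = 0 ∧ φ Set.univ = 1 ∧ (∀ A ∈ 𝒜, 0 ≤ φ A ∧ φ A ≤ 1) ∧
    ∀ A ∈ 𝒜, ∀ B ∈ 𝒜, A ⊆ B → φ A ≤ φ B

/-- Total monotonicity of a capacity `φ` on the field `𝒜`. -/
def TotallyMonotone (𝒜 : Set (Set Ω)) (φ : Set Ω → ℝ) : Prop :=
  ∀ n : ℕ, 2 ≤ n → ∀ A : Fin n → Set Ω, (∀ i, A i ∈ 𝒜) →
    ∑ s ∈ Finset.univ.powerset.filter (fun s : Finset (Fin n) => s.Nonempty),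
      (-1 : ℝ) ^ (s.card - 1) * φ (⋂ i ∈ s, A i) ≤ φ (⋃ i, A i)

/-- Restriction of a conditional probability to the domain `𝒜 × ℬ⁰`, viewed as a point
of the product space `ℝ^(𝒜 × ℬ⁰)`. -/
def restrictPairs (𝒜 ℬ : Set (Set Ω)) (Q : Set Ω → Set Ω → ℝ)
    (p : {p : Set Ω × Set Ω // p.1 ∈ 𝒜 ∧ p.2 ∈ ℬ ∧ p.2.Nonempty}) : ℝ :=
  Q p.val.1 p.val.2

/-- Restriction of a set function to the domain `𝒜`, viewed as a point of `ℝ^𝒜`. -/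
def restrictDom (𝒜 : Set (Set Ω)) (μ : Set Ω → ℝ) (A : {A : Set Ω // A ∈ 𝒜}) : ℝ :=
  μ A.val

/-- The field of all unions of members of the partition `H`, i.e. `⟨ℒ⟩*`. -/
def unionsOf {ι : Type*} (H : ι → Set Ω) : Set (Set Ω) :=
  {A | ∃ S : Set ι, A = ⋃ i ∈ S, H i}

/-- The set `𝒬^fd` of fully ℒ-disintegrable full conditional probabilities on `𝒜`
extending `{π, σ}`. -/
def QfdSet {ι : Type*} (𝒜 𝒜L : Set (Set Ω)) (H : ι → Set Ω)
    (π : Set Ω → ℝ) (σ : Set Ω → ι → ℝ) : Set (Set Ω → Set Ω → ℝ) :=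
  {Q | IsFCP 𝒜 Q ∧ ExtendsPriorStrategy 𝒜 𝒜L H π σ Q ∧
    ∀ F ∈ 𝒜, ∀ K ∈ 𝒜L, K.Nonempty →
      Q F K = lowerSInt H 𝒜L (fun i => σ F i) fun B => Q B K}

/-- The set `𝒬^fsc` of fully strongly ℒ-conglomerable full conditional probabilities
on `𝒜` extending `{π, σ}`. -/
def QfscSet {ι : Type*} (𝒜 𝒜L : Set (Set Ω)) (H : ι → Set Ω)
    (π : Set Ω → ℝ) (σ : Set Ω → ι → ℝ) : Set (Set Ω → Set Ω → ℝ) :=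
  {Q | IsFCP 𝒜 Q ∧ ExtendsPriorStrategy 𝒜 𝒜L H π σ Q ∧
    ∀ F ∈ 𝒜, ∀ K ∈ 𝒜L, K.Nonempty → ∀ B ∈ 𝒜L, B.Nonempty → B ⊆ K →
      Q B K * sInf {x | ∃ i, H i ⊆ B ∧ x = σ F i} ≤ Q (F ∩ B) K ∧
      Q (F ∩ B) K ≤ Q B K * sSup {x | ∃ i, H i ⊆ B ∧ x = σ F i}}

/-- The set `𝒫^sc` of strongly ℒ-conglomerable joint probabilities consistent with `{π, σ}`. -/
def PscSet {ι : Type*} (𝒜 𝒜L : Set (Set Ω)) (H : ι → Set Ω)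
    (π : Set Ω → ℝ) (σ : Set Ω → ι → ℝ) : Set (Set Ω → ℝ) :=
  {μ | (∃ P ∈ FCPSet 𝒜 𝒜L H π σ, μ = fun F => P F Set.univ) ∧
    ∀ F ∈ 𝒜, ∀ B ∈ 𝒜L, B.Nonempty →
      π B * sInf {x | ∃ i, H i ⊆ B ∧ x = σ F i} ≤ μ (F ∩ B) ∧
      μ (F ∩ B) ≤ π B * sSup {x | ∃ i, H i ⊆ B ∧ x = σ F i}}

/-- The set `𝒫^fd` of fully ℒ-disintegrable conditional probabilities on `𝒜 × 𝒜L⁰`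
extending `{π, σ}`. -/
def PfdSet {ι : Type*} (𝒜 𝒜L : Set (Set Ω)) (H : ι → Set Ω)
    (π : Set Ω → ℝ) (σ : Set Ω → ι → ℝ) : Set (Set Ω → Set Ω → ℝ) :=
  {P | (∀ E ∈ 𝒜, ∀ K ∈ 𝒜L, K.Nonempty → P E K = P (E ∩ K) K) ∧
    (∀ K ∈ 𝒜L, K.Nonempty → IsFAP 𝒜 fun E => P E K) ∧
    (∀ E ∈ 𝒜, ∀ F ∈ 𝒜, ∀ K ∈ 𝒜L, K.Nonempty → E ∩ K ∈ 𝒜L → (E ∩ K).Nonempty →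
      P (E ∩ F) K = P E K * P F (E ∩ K)) ∧
    (∀ B ∈ 𝒜L, P B Set.univ = π B) ∧ (∀ F ∈ 𝒜, ∀ i, P F (H i) = σ F i) ∧
    ∀ F ∈ 𝒜, ∀ K ∈ 𝒜L, K.Nonempty →
      P F K = lowerSInt H 𝒜L (fun i => σ F i) fun B => P B K}

/-- The Choquet integral `C∫ X dφ = ∫₀¹ φ₊((X ≥ t)) dt` of a `[0,1]`-valued `X : ℒ → ℝ`
with respect to a capacity `φ` on `𝒜L`, where `φ₊` is the inner extension of `φ`. -/
noncomputable def choquetInt {ι : Type*} (H : ι → Set Ω) (𝒜L : Set (Set Ω))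
    (X : ι → ℝ) (φ : Set Ω → ℝ) : ℝ :=
  ∫ t in (0 : ℝ)..(1 : ℝ),
    sSup {y | ∃ B ∈ 𝒜L, B ⊆ (⋃ i ∈ {i | t ≤ X i}, H i) ∧ y = φ B}

section AuxLemmas

variable {Ω : Type*} {𝒜 : Set (Set Ω)} {μ : Set Ω → ℝ}

lemma aux_empty_mem (h : IsSetField 𝒜) : (∅ : Set Ω) ∈ 𝒜 := by
  simpa using h.2.1 _ h.1

lemma aux_inter_mem (h : IsSetField 𝒜) {A B : Set Ω} (hA : A ∈ 𝒜) (hB : B ∈ 𝒜) :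
    A ∩ B ∈ 𝒜 := by
  have := h.2.1 _ (h.2.2 _ (h.2.1 _ hA) _ (h.2.1 _ hB))
  simpa [Set.compl_union] using this

lemma aux_fap_split (h : IsSetField 𝒜) (hμ : IsFAP 𝒜 μ) {A B : Set Ω}
    (hA : A ∈ 𝒜) (hB : B ∈ 𝒜) : μ A = μ (A ∩ B) + μ (A ∩ Bᶜ) := by
  have hd : Disjoint (A ∩ B) (A ∩ Bᶜ) :=
    Set.disjoint_left.mpr fun x hx hx' => hx'.2 hx.2
  have he : A ∩ B ∪ A ∩ Bᶜ = A := by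
    rw [← Set.inter_union_distrib_left]; simp
  have := hμ.2.2 _ (aux_inter_mem h hA hB) _ (aux_inter_mem h hA (h.2.1 _ hB)) hd
  rw [he] at this
  exact this

lemma aux_fap_compl (h : IsSetField 𝒜) (hμ : IsFAP 𝒜 μ) {A : Set Ω} (hA : A ∈ 𝒜) :
    μ Aᶜ = 1 - μ A := by
  have := hμ.2.2 _ hA _ (h.2.1 _ hA) disjoint_compl_right
  rw [Set.union_compl_self] at this
  rw [hμ.2.1] at this
  linarith

lemma aux_fap_mono (h : IsSetField 𝒜) (hμ : IsFAP 𝒜 μ) {A B : Set Ω}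
    (hA : A ∈ 𝒜) (hB : B ∈ 𝒜) (hAB : A ⊆ B) : μ A ≤ μ B := by
  have hsplit := aux_fap_split h hμ hB hA
  rw [Set.inter_eq_self_of_subset_right hAB] at hsplit
  have hnn := (hμ.1 _ (aux_inter_mem h hB (h.2.1 _ hA))).1
  linarith

lemma aux_fap_union_inter (h : IsSetField 𝒜) (hμ : IsFAP 𝒜 μ) {A B : Set Ω}
    (hA : A ∈ 𝒜) (hB : B ∈ 𝒜) : μ (A ∪ B) + μ (A ∩ B) = μ A + μ B := by
  have hd : Disjoint A (B ∩ Aᶜ) := Set.disjoint_left.mpr fun x hx hx' => hx'.2 hx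
  have he : A ∪ B ∩ Aᶜ = A ∪ B := by
    rw [Set.union_inter_distrib_left]; simp
  have h1 := hμ.2.2 _ hA _ (aux_inter_mem h hB (h.2.1 _ hA)) hd
  rw [he] at h1
  have h2 := aux_fap_split h hμ hB hA
  rw [Set.inter_comm B A] at h2
  linarith

end AuxLemmas

/-- if `𝒜` is the smallest field containing `𝒜L ∪ 𝒜E`, every statistical
model `lam` on `𝒜E × ℒ` extends to exactly one strategy `σ` on `𝒜 × ℒ`. -/
theorem statement0 {Ω ι κ : Type*} [Nonempty Ω] (H : ι → Set Ω) (E : κ → Set Ω)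
    (𝒜L 𝒜E 𝒜 : Set (Set Ω))
    (hH : IsPartition H) (hE : IsPartition E)
    (h𝒜L : IsFieldOver H 𝒜L) (h𝒜E : IsFieldOver E 𝒜E)
    (h𝒜field : IsSetField 𝒜) (h𝒜sub : 𝒜L ∪ 𝒜E ⊆ 𝒜)
    (h𝒜min : ∀ ℬ : Set (Set Ω), IsSetField ℬ → 𝒜L ∪ 𝒜E ⊆ ℬ → 𝒜 ⊆ ℬ)
    (lam : Set Ω → ι → ℝ) (hlam : IsStrategy 𝒜E H lam) :
    ∃ σ : Set Ω → ι → ℝ,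
      (IsStrategy 𝒜 H σ ∧ ∀ F ∈ 𝒜E, ∀ i, σ F i = lam F i) ∧
      ∀ σ' : Set Ω → ι → ℝ,
        (IsStrategy 𝒜 H σ' ∧ ∀ F ∈ 𝒜E, ∀ i, σ' F i = lam F i) →
        ∀ F ∈ 𝒜, ∀ i, σ' F i = σ F i := by
  classical
  have hFE : IsSetField 𝒜E := h𝒜E.1
  -- the subfield of 𝒜 of sets that restrict to a 𝒜E-set on each H i
  set ℬ : Set (Set Ω) := {F | F ∈ 𝒜 ∧ ∀ i, ∃ B ∈ 𝒜E, F ∩ H i = H i ∩ B} with hℬdef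
  have hℬfield : IsSetField ℬ := by
    refine ⟨⟨h𝒜field.1, fun i => ⟨Set.univ, hFE.1, by simp⟩⟩, ?_, ?_⟩
    · rintro A ⟨hA𝒜, hA⟩
      refine ⟨h𝒜field.2.1 _ hA𝒜, fun i => ?_⟩
      obtain ⟨B, hB, hBe⟩ := hA i
      refine ⟨Bᶜ, hFE.2.1 _ hB, ?_⟩
      ext x
      have hx := Set.ext_iff.mp hBe x
      simp only [Set.mem_inter_iff, Set.mem_compl_iff] at *
      tauto
    · rintro A ⟨hA𝒜, hA⟩ B ⟨hB𝒜, hB⟩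
      refine ⟨h𝒜field.2.2 _ hA𝒜 _ hB𝒜, fun i => ?_⟩
      obtain ⟨C, hC, hCe⟩ := hA i
      obtain ⟨D, hD, hDe⟩ := hB i
      exact ⟨C ∪ D, hFE.2.2 _ hC _ hD, by
        rw [Set.union_inter_distrib_right, hCe, hDe, Set.inter_union_distrib_left]⟩
  have hsub : 𝒜L ∪ 𝒜E ⊆ ℬ := by
    rintro A (hA | hA)
    · refine ⟨h𝒜sub (Or.inl hA), fun i => ?_⟩
      obtain ⟨S, hS⟩ := h𝒜L.2.2 A hA
      by_cases hi : i ∈ S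
      · refine ⟨Set.univ, hFE.1, ?_⟩
        have hsubA : H i ⊆ A := hS ▸ Set.subset_biUnion_of_mem hi
        rw [Set.inter_eq_self_of_subset_right hsubA, Set.inter_univ]
      · refine ⟨∅, aux_empty_mem hFE, ?_⟩
        have hdis : Disjoint A (H i) := by
          rw [hS]
          refine Set.disjoint_left.mpr ?_
          rintro x hx hxi
          simp only [Set.mem_iUnion] at hx
          obtain ⟨j, hj, hxj⟩ := hx
          exact (Set.disjoint_left.mp
            (hH.2.1 (show j ≠ i from fun h => hi (h ▸ hj))) hxj) hxi
        rw [hdis.inter_eq, Set.inter_empty]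
    · exact ⟨h𝒜sub (Or.inr hA), fun i => ⟨A, hA, Set.inter_comm _ _⟩⟩
  have hcov : ∀ F, F ∈ 𝒜 → ∀ i, ∃ B ∈ 𝒜E, F ∩ H i = H i ∩ B :=
    fun F hF => (h𝒜min ℬ hℬfield hsub hF).2
  have lamFAP : ∀ i, IsFAP 𝒜E fun F => lam F i := fun i => (hlam i).1
  have lam1 : ∀ i, ∀ F ∈ 𝒜E, H i ⊆ F → lam F i = 1 := fun i => (hlam i).2
  have lam0 : ∀ i, ∀ B ∈ 𝒜E, H i ∩ B = ∅ → lam B i = 0 := by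
    intro i B hB hint
    have hsubc : H i ⊆ Bᶜ := fun x hx hxB =>
      Set.eq_empty_iff_forall_notMem.mp hint x ⟨hx, hxB⟩
    have h1 : lam Bᶜ i = 1 := lam1 i Bᶜ (hFE.2.1 _ hB) hsubc
    have h2 := aux_fap_compl hFE (lamFAP i) hB
    linarith
  -- well-definedness of the extension
  have wd : ∀ i, ∀ B ∈ 𝒜E, ∀ B' ∈ 𝒜E, H i ∩ B = H i ∩ B' → lam B i = lam B' i := by
    intro i B hB B' hB' he
    have h1 := aux_fap_split hFE (lamFAP i) hB hB'
    have h2 := aux_fap_split hFE (lamFAP i) hB' hB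
    have z1 : lam (B ∩ B'ᶜ) i = 0 := by
      refine lam0 i _ (aux_inter_mem hFE hB (hFE.2.1 _ hB')) ?_
      refine Set.eq_empty_iff_forall_notMem.mpr ?_
      rintro x ⟨hxH, hxB, hxB'⟩
      exact hxB' ((Set.ext_iff.mp he x).mp ⟨hxH, hxB⟩).2
    have z2 : lam (B' ∩ Bᶜ) i = 0 := by
      refine lam0 i _ (aux_inter_mem hFE hB' (hFE.2.1 _ hB)) ?_
      refine Set.eq_empty_iff_forall_notMem.mpr ?_
      rintro x ⟨hxH, hxB', hxB⟩
      exact hxB ((Set.ext_iff.mp he x).mpr ⟨hxH, hxB'⟩).2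
    rw [Set.inter_comm B' B] at h2
    linarith
  choose Bof hBofmem hBofeq using hcov
  set σ : Set Ω → ι → ℝ := fun F i => if h : F ∈ 𝒜 then lam (Bof F h i) i else 0
    with hσdef
  have hσval : ∀ {F : Set Ω} (hF : F ∈ 𝒜) (i : ι) {B : Set Ω}, B ∈ 𝒜E →
      F ∩ H i = H i ∩ B → σ F i = lam B i := by
    intro F hF i B hB he
    simp only [hσdef, dif_pos hF]
    exact wd i _ (hBofmem F hF i) B hB (by rw [← hBofeq F hF i, he])
  have hHimem : ∀ i, H i ∈ 𝒜 := fun i => h𝒜sub (Or.inl (h𝒜L.2.1 i))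
  have hσstrat : IsStrategy 𝒜 H σ := by
    intro i
    refine ⟨⟨?_, ?_, ?_⟩, ?_⟩
    · intro A hA
      show 0 ≤ σ A i ∧ σ A i ≤ 1
      rw [hσval hA i (hBofmem A hA i) (hBofeq A hA i)]
      exact (lamFAP i).1 _ (hBofmem A hA i)
    · have huniv : (Set.univ : Set Ω) ∈ 𝒜 := h𝒜field.1
      have he := hBofeq _ huniv i
      have hsubB : H i ⊆ Bof _ huniv i := fun x hx =>
        ((Set.ext_iff.mp he x).mp ⟨trivial, hx⟩).2
      show σ Set.univ i = 1
      rw [hσval huniv i (hBofmem _ huniv i) he]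
      exact lam1 i _ (hBofmem _ huniv i) hsubB
    · intro A hA B hB hdis
      have hC := hBofmem A hA i
      have hD := hBofmem B hB i
      have hCe := hBofeq A hA i
      have hDe := hBofeq B hB i
      set C := Bof A hA i
      set D := Bof B hB i
      have hU : A ∪ B ∈ 𝒜 := h𝒜field.2.2 _ hA _ hB
      have hUe : (A ∪ B) ∩ H i = H i ∩ (C ∪ D) := by
        rw [Set.union_inter_distrib_right, hCe, hDe, Set.inter_union_distrib_left]
      have h1 : σ (A ∪ B) i = lam (C ∪ D) i :=
        hσval hU i (hFE.2.2 _ hC _ hD) hUe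
      have hz : lam (C ∩ D) i = 0 := by
        refine lam0 i _ (aux_inter_mem hFE hC hD) ?_
        refine Set.eq_empty_iff_forall_notMem.mpr ?_
        rintro x ⟨hxH, hxC, hxD⟩
        have hxA : x ∈ A := ((Set.ext_iff.mp hCe x).mpr ⟨hxH, hxC⟩).1
        have hxB : x ∈ B := ((Set.ext_iff.mp hDe x).mpr ⟨hxH, hxD⟩).1
        exact Set.disjoint_left.mp hdis hxA hxB
      have h2 := aux_fap_union_inter hFE (lamFAP i) hC hD
      show σ (A ∪ B) i = σ A i + σ B i
      rw [h1, hσval hA i hC hCe, hσval hB i hD hDe]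
      linarith
    · intro F hF hsubF
      have he := hBofeq F hF i
      have hsubB : H i ⊆ Bof F hF i := fun x hx =>
        ((Set.ext_iff.mp he x).mp ⟨hsubF hx, hx⟩).2
      rw [hσval hF i (hBofmem F hF i) he]
      exact lam1 i _ (hBofmem F hF i) hsubB
  have hσrestr : ∀ F ∈ 𝒜E, ∀ i, σ F i = lam F i := fun F hF i =>
    hσval (h𝒜sub (Or.inr hF)) i hF (Set.inter_comm _ _)
  refine ⟨σ, ⟨hσstrat, hσrestr⟩, ?_⟩
  rintro σ' ⟨hσ'strat, hσ'restr⟩ F hF i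
  have hFAP' : IsFAP 𝒜 fun G => σ' G i := (hσ'strat i).1
  have hHi1 : σ' (H i) i = 1 := (hσ'strat i).2 _ (hHimem i) subset_rfl
  have hHic0 : σ' (H i)ᶜ i = 0 := by
    have := aux_fap_compl h𝒜field hFAP' (hHimem i)
    rw [this, hHi1]; ring
  have conc : ∀ G, G ∈ 𝒜 → σ' G i = σ' (G ∩ H i) i := by
    intro G hG
    have hsplit := aux_fap_split h𝒜field hFAP' hG (hHimem i)
    have hmem : G ∩ (H i)ᶜ ∈ 𝒜 := aux_inter_mem h𝒜field hG (h𝒜field.2.1 _ (hHimem i))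
    have h0 : σ' (G ∩ (H i)ᶜ) i = 0 := by
      have hle := aux_fap_mono h𝒜field hFAP' hmem (h𝒜field.2.1 _ (hHimem i))
        Set.inter_subset_right
      have hge := (hFAP'.1 _ hmem).1
      simp only at hle hge hHic0
      linarith
    linarith
  have hB := hBofmem F hF i
  have hBe := hBofeq F hF i
  have hB𝒜 : Bof F hF i ∈ 𝒜 := h𝒜sub (Or.inr hB)
  calc σ' F i = σ' (F ∩ H i) i := conc F hF
    _ = σ' (H i ∩ Bof F hF i) i := by rw [hBe]
    _ = σ' (Bof F hF i) i := by
        rw [conc _ hB𝒜, Set.inter_comm]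
    _ = lam (Bof F hF i) i := hσ'restr _ hB i
    _ = σ F i := (hσval hF i hB hBe).symm
end

section
/- For every F ∈ 𝒜, the lower joint probability satisfies P^j_*(F) = sup{ Σ_{h=1}^n σ(F|H_{i_h})·π(H_{i_h}) + Σ_{k : B_k ⊆ F} π(B_k) }, the supremum being over all finite partitions of Ω of the form {H_{i_1},…,H_{i_n}} ∪ {B_1,…,B_t} contained in 𝒜_ℒ, where each H_{i_h} ∈ ℒ and each B_k ∈ 𝒜_ℒ (n, t ≥ 0 and the sets are pairwise disjoint with union Ω). -/
open Set

open scoped Classical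

variable {Ω : Type*}

section Aux

variable {Ω : Type*}

lemma IsSetField.empty_mem' {𝒞 : Set (Set Ω)} (h : IsSetField 𝒞) : ∅ ∈ 𝒞 := by
  have := h.2.1 _ h.1
  simpa using this

lemma IsSetField.inter_mem' {𝒞 : Set (Set Ω)} (h : IsSetField 𝒞) {A B : Set Ω}
    (hA : A ∈ 𝒞) (hB : B ∈ 𝒞) : A ∩ B ∈ 𝒞 := by
  have := h.2.1 _ (h.2.2 _ (h.2.1 _ hA) _ (h.2.1 _ hB))
  simpa [Set.compl_union] using this

lemma IsSetField.diff_mem' {𝒞 : Set (Set Ω)} (h : IsSetField 𝒞) {A B : Set Ω}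
    (hA : A ∈ 𝒞) (hB : B ∈ 𝒞) : A \ B ∈ 𝒞 := by
  rw [Set.diff_eq]
  exact h.inter_mem' hA (h.2.1 _ hB)

lemma IsSetField.biUnion_mem' {𝒞 : Set (Set Ω)} (h : IsSetField 𝒞) {γ : Type*}
    (u : Finset γ) (W : γ → Set Ω) (hW : ∀ x ∈ u, W x ∈ 𝒞) :
    (⋃ x ∈ u, W x) ∈ 𝒞 := by
  classical
  induction u using Finset.induction_on with
  | empty => simpa using h.empty_mem'
  | insert a s hx ih =>
    rw [Finset.set_biUnion_insert]
    exact h.2.2 _ (hW a (Finset.mem_insert_self a s)) _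
      (ih fun x hxs => hW x (Finset.mem_insert_of_mem hxs))

lemma IsSetField.biInter_mem' {𝒞 : Set (Set Ω)} (h : IsSetField 𝒞) {γ : Type*}
    (u : Finset γ) (W : γ → Set Ω) (hW : ∀ x ∈ u, W x ∈ 𝒞) :
    (⋂ x ∈ u, W x) ∈ 𝒞 := by
  classical
  induction u using Finset.induction_on with
  | empty => simpa using h.1
  | insert a s hx ih =>
    rw [Finset.set_biInter_insert]
    exact h.inter_mem' (hW a (Finset.mem_insert_self a s))
      (ih fun x hxs => hW x (Finset.mem_insert_of_mem hxs))

/-- A nonnegative finitely additive set function on a collection. -/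
def AddOn (𝒞 : Set (Set Ω)) (μ : Set Ω → ℝ) : Prop :=
  (∀ A ∈ 𝒞, 0 ≤ μ A) ∧ ∀ A ∈ 𝒞, ∀ B ∈ 𝒞, Disjoint A B → μ (A ∪ B) = μ A + μ B

lemma IsFAP.addOn {𝒞 : Set (Set Ω)} {μ : Set Ω → ℝ} (h : IsFAP 𝒞 μ) : AddOn 𝒞 μ :=
  ⟨fun A hA => (h.1 A hA).1, h.2.2⟩

lemma AddOn.empty' {𝒞 : Set (Set Ω)} {μ : Set Ω → ℝ} (h𝒞 : IsSetField 𝒞)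
    (h : AddOn 𝒞 μ) : μ ∅ = 0 := by
  have := h.2 ∅ h𝒞.empty_mem' ∅ h𝒞.empty_mem' (by simp)
  simpa using this.symm

lemma AddOn.mono' {𝒞 : Set (Set Ω)} {μ : Set Ω → ℝ} (h𝒞 : IsSetField 𝒞)
    (h : AddOn 𝒞 μ) {A B : Set Ω} (hA : A ∈ 𝒞) (hB : B ∈ 𝒞) (hAB : A ⊆ B) :
    μ A ≤ μ B := by
  have hd : B = A ∪ (B \ A) := by
    rw [Set.union_diff_cancel hAB]
  have := h.2 A hA (B \ A) (h𝒞.diff_mem' hB hA) disjoint_sdiff_right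
  rw [← hd] at this
  have h0 := h.1 (B \ A) (h𝒞.diff_mem' hB hA)
  linarith

lemma AddOn.finsetSum {𝒞 : Set (Set Ω)} {μ : Set Ω → ℝ} (h𝒞 : IsSetField 𝒞)
    (h : AddOn 𝒞 μ) {γ : Type*} (u : Finset γ) (W : γ → Set Ω)
    (hW : ∀ x ∈ u, W x ∈ 𝒞)
    (hd : ∀ x ∈ u, ∀ y ∈ u, x ≠ y → Disjoint (W x) (W y)) :
    μ (⋃ x ∈ u, W x) = ∑ x ∈ u, μ (W x) := by
  classical
  induction u using Finset.induction_on with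
  | empty => simpa using h.empty' h𝒞
  | insert a s hx ih =>
    rw [Finset.set_biUnion_insert, Finset.sum_insert hx]
    have hWa : W a ∈ 𝒞 := hW a (Finset.mem_insert_self a s)
    have hWs : (⋃ x ∈ s, W x) ∈ 𝒞 :=
      h𝒞.biUnion_mem' s W fun x hxs => hW x (Finset.mem_insert_of_mem hxs)
    have hdisj : Disjoint (W a) (⋃ x ∈ s, W x) := by
      refine Set.disjoint_iUnion₂_right.2 fun x hxs => ?_
      exact hd a (Finset.mem_insert_self a s) x (Finset.mem_insert_of_mem hxs)
        (fun hax => hx (hax ▸ hxs))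
    rw [h.2 _ hWa _ hWs hdisj,
      ih (fun x hxs => hW x (Finset.mem_insert_of_mem hxs))
        (fun x hxs y hys hxy => hd x (Finset.mem_insert_of_mem hxs) y
          (Finset.mem_insert_of_mem hys) hxy)]

lemma key_dutch {Ω : Type*} [Nonempty Ω] {𝒢 : Set (Set Ω)} (h𝒢 : IsSetField 𝒢)
    {ρ₀ : Set Ω → ℝ} (hρ : AddOn 𝒢 ρ₀) {γ : Type*} (u : Finset γ) (G : γ → Set Ω)
    (hG : ∀ k ∈ u, G k ∈ 𝒢) (c : γ → ℝ) :
    ∑ k ∈ u, c k * ρ₀ (G k) ≤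
      ρ₀ Set.univ * sSup (Set.range fun ω => ∑ k ∈ u, c k * (if ω ∈ G k then (1:ℝ) else 0)) := by
  classical
  set h : Ω → ℝ := fun ω => ∑ k ∈ u, c k * (if ω ∈ G k then (1:ℝ) else 0) with hdef
  have hbdd : BddAbove (Set.range h) := by
    refine ⟨∑ k ∈ u, |c k|, ?_⟩
    rintro y ⟨ω, rfl⟩
    refine Finset.sum_le_sum fun k hk => ?_
    split <;> simp [abs_nonneg, le_abs_self]
  have hne : (Set.range h).Nonempty := Set.range_nonempty h
  set M := sSup (Set.range h) with hM
  -- atoms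
  set A : ({x // x ∈ u} → Bool) → Set Ω := fun b =>
    ⋂ k ∈ (Finset.univ : Finset {x // x ∈ u}),
      (if b k = true then G k.val else (G k.val)ᶜ) with hA
  have hmemA : ∀ b ω, ω ∈ A b ↔ ∀ k : {x // x ∈ u}, (ω ∈ G k.val ↔ b k = true) := by
    intro b ω
    simp only [hA, Set.mem_iInter]
    constructor
    · intro hh k
      have := hh k (Finset.mem_univ k)
      by_cases hb : b k = true <;> simp [hb] at this ⊢ <;> tauto
    · intro hh k _
      by_cases hb : b k = true <;> simp [hb, ← hh k] <;> simp [hh k, hb]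
  have hA𝒢 : ∀ b, A b ∈ 𝒢 := by
    intro b
    refine h𝒢.biInter_mem' _ _ fun k hk => ?_
    split
    · exact hG k.val k.2
    · exact h𝒢.2.1 _ (hG k.val k.2)
  have hAd : ∀ b b', b ≠ b' → Disjoint (A b) (A b') := by
    intro b b' hbb
    obtain ⟨k, hk⟩ := Function.ne_iff.1 hbb
    rw [Set.disjoint_left]
    intro ω hω hω'
    have h1 := (hmemA b ω).1 hω k
    have h2 := (hmemA b' ω).1 hω' k
    apply hk
    cases hbk : b k <;> cases hbk' : b' k <;> simp_all
  have hcover : (⋃ b ∈ (Finset.univ : Finset ({x // x ∈ u} → Bool)), A b) = Set.univ := by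
    refine Set.eq_univ_of_forall fun ω => ?_
    refine Set.mem_biUnion (Finset.mem_univ (fun k => decide (ω ∈ G k.val))) ?_
    rw [hmemA]
    intro k
    simp
  have hGdec : ∀ k : {x // x ∈ u}, G k.val =
      ⋃ b ∈ Finset.univ.filter (fun b : {x // x ∈ u} → Bool => b k = true), A b := by
    intro k
    ext ω
    constructor
    · intro hω
      have hmem : (fun k' : {x // x ∈ u} => decide (ω ∈ G k'.val)) ∈
          Finset.univ.filter (fun b : {x // x ∈ u} → Bool => b k = true) :=
        Finset.mem_filter.2 ⟨Finset.mem_univ _, decide_eq_true hω⟩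
      refine Set.mem_biUnion hmem ?_
      rw [hmemA]
      intro k'
      simp
    · intro hω
      obtain ⟨b, hb, hωb⟩ := Set.mem_iUnion₂.1 hω
      have := (hmemA b ω).1 hωb k
      rw [this]
      exact (Finset.mem_filter.1 hb).2
  have hρsum : ∀ k : {x // x ∈ u}, ρ₀ (G k.val) =
      ∑ b ∈ Finset.univ.filter (fun b : {x // x ∈ u} → Bool => b k = true), ρ₀ (A b) := by
    intro k
    rw [hGdec k]
    exact hρ.finsetSum h𝒢 _ _ (fun b _ => hA𝒢 b)
      (fun b _ b' _ hbb => hAd b b' hbb)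
  have hρA_nonneg : ∀ b, 0 ≤ ρ₀ (A b) := fun b => hρ.1 _ (hA𝒢 b)
  set v : ({x // x ∈ u} → Bool) → ℝ := fun b => ∑ k ∈ u.attach, (if b k = true then c k.val else 0)
    with hv
  have step1 : ∑ k ∈ u, c k * ρ₀ (G k) =
      ∑ b ∈ (Finset.univ : Finset ({x // x ∈ u} → Bool)), ρ₀ (A b) * v b := by
    rw [← Finset.sum_attach u (fun k => c k * ρ₀ (G k))]
    have : ∀ k : {x // x ∈ u}, c k.val * ρ₀ (G k.val) =
        ∑ b ∈ (Finset.univ : Finset ({x // x ∈ u} → Bool)),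
          (if b k = true then c k.val * ρ₀ (A b) else 0) := by
      intro k
      rw [hρsum k, Finset.mul_sum, ← Finset.sum_filter]
    rw [Finset.sum_congr rfl fun k _ => this k, Finset.sum_comm]
    refine Finset.sum_congr rfl fun b _ => ?_
    rw [hv, Finset.mul_sum]
    refine Finset.sum_congr rfl fun k _ => ?_
    split <;> ring
  have step2 : ∀ b, ρ₀ (A b) * v b ≤ ρ₀ (A b) * M := by
    intro b
    rcases Set.eq_empty_or_nonempty (A b) with hEmp | ⟨ω₀, hω₀⟩
    · rw [hEmp, hρ.empty' h𝒢]
      simp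
    · refine mul_le_mul_of_nonneg_left ?_ (hρA_nonneg b)
      have hval : v b = h ω₀ := by
        rw [hv, hdef]
        simp only
        rw [← Finset.sum_attach u (fun k => c k * (if ω₀ ∈ G k then (1:ℝ) else 0))]
        refine Finset.sum_congr rfl fun k _ => ?_
        have := (hmemA b ω₀).1 hω₀ k
        by_cases hb : b k = true <;> simp [hb] at this ⊢ <;> simp [this, hb]
      rw [hval]
      exact le_csSup hbdd ⟨ω₀, rfl⟩
  have step3 : ∑ b ∈ (Finset.univ : Finset ({x // x ∈ u} → Bool)), ρ₀ (A b) = ρ₀ Set.univ := by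
    rw [← hcover]
    exact (hρ.finsetSum h𝒢 _ _ (fun b _ => hA𝒢 b) (fun b _ b' _ hbb => hAd b b' hbb)).symm
  calc ∑ k ∈ u, c k * ρ₀ (G k) = ∑ b, ρ₀ (A b) * v b := step1
    _ ≤ ∑ b, ρ₀ (A b) * M := Finset.sum_le_sum fun b _ => step2 b
    _ = ρ₀ Set.univ * M := by rw [← Finset.sum_mul, step3]

/-- Extension of a nonnegative finitely additive set function from a subfield to all
subsets, achieving the inner value at a prescribed set `F`. -/
lemma exists_rho {Ω : Type*} [Nonempty Ω] {𝒜L : Set (Set Ω)} (h𝒜L : IsSetField 𝒜L)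
    (π' : Set Ω → ℝ) (hπ' : AddOn 𝒜L π') (F : Set Ω) :
    ∃ ρ : Set Ω → ℝ, (∀ A, 0 ≤ ρ A) ∧ (∀ A B : Set Ω, Disjoint A B → ρ (A ∪ B) = ρ A + ρ B) ∧
      (∀ B ∈ 𝒜L, ρ B = π' B) ∧
      ρ F = sSup {x | ∃ C ∈ 𝒜L, C ⊆ F ∧ x = π' C} := by
  classical
  have hempty : π' ∅ = 0 := hπ'.empty' h𝒜L
  set t := π' Set.univ with ht
  have ht0 : 0 ≤ t := hπ'.1 _ h𝒜L.1
  have hsplit : ∀ X ∈ 𝒜L, ∀ Y ∈ 𝒜L, π' X = π' (X ∩ Y) + π' (X \ Y) := by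
    intro X hX Y hY
    have hd : Disjoint (X ∩ Y) (X \ Y) :=
      (Set.disjoint_sdiff_right (s := Y) (t := X)).mono_left Set.inter_subset_right
    have := hπ'.2 (X ∩ Y) (h𝒜L.inter_mem' hX hY) (X \ Y) (h𝒜L.diff_mem' hX hY) hd
    rw [Set.inter_union_diff] at this
    exact this
  -- inner measure
  set inn : Set Ω → ℝ := fun D => sSup {x | ∃ C ∈ 𝒜L, C ⊆ D ∧ x = π' C} with hinn
  have hinnS_ne : ∀ D : Set Ω, {x | ∃ C ∈ 𝒜L, C ⊆ D ∧ x = π' C}.Nonempty :=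
    fun D => ⟨π' ∅, ∅, h𝒜L.empty_mem', Set.empty_subset D, rfl⟩
  have hinnS_bdd : ∀ D : Set Ω, BddAbove {x | ∃ C ∈ 𝒜L, C ⊆ D ∧ x = π' C} := by
    intro D
    refine ⟨t, ?_⟩
    rintro x ⟨C, hC, hCD, rfl⟩
    exact hπ'.mono' h𝒜L hC h𝒜L.1 (Set.subset_univ C)
  have hinn_le : ∀ D C, C ∈ 𝒜L → C ⊆ D → π' C ≤ inn D :=
    fun D C hC hCD => le_csSup (hinnS_bdd D) ⟨C, hC, hCD, rfl⟩
  have hinn_nonneg : ∀ D, 0 ≤ inn D := by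
    intro D
    have := hinn_le D ∅ h𝒜L.empty_mem' (Set.empty_subset D)
    rwa [hempty] at this
  have hinn_sup_le : ∀ (D : Set Ω) (y : ℝ), (∀ C ∈ 𝒜L, C ⊆ D → π' C ≤ y) → inn D ≤ y := by
    intro D y hy
    refine csSup_le (hinnS_ne D) ?_
    rintro x ⟨C, hC, hCD, rfl⟩
    exact hy C hC hCD
  -- outer measure
  set out : Set Ω → ℝ := fun D => sInf {x | ∃ C ∈ 𝒜L, D ⊆ C ∧ x = π' C} with hout
  have houtS_ne : ∀ D : Set Ω, {x | ∃ C ∈ 𝒜L, D ⊆ C ∧ x = π' C}.Nonempty :=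
    fun D => ⟨t, Set.univ, h𝒜L.1, Set.subset_univ D, rfl⟩
  have houtS_bdd : ∀ D : Set Ω, BddBelow {x | ∃ C ∈ 𝒜L, D ⊆ C ∧ x = π' C} := by
    intro D
    refine ⟨0, ?_⟩
    rintro x ⟨C, hC, _, rfl⟩
    exact hπ'.1 C hC
  have hout_le : ∀ D C, C ∈ 𝒜L → D ⊆ C → out D ≤ π' C :=
    fun D C hC hDC => csInf_le (houtS_bdd D) ⟨C, hC, hDC, rfl⟩
  have hle_out : ∀ (D : Set Ω) (y : ℝ), (∀ C ∈ 𝒜L, D ⊆ C → y ≤ π' C) → y ≤ out D := by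
    intro D y hy
    refine le_csInf (houtS_ne D) ?_
    rintro x ⟨C, hC, hDC, rfl⟩
    exact hy C hC hDC
  have hout_nonneg : ∀ D, 0 ≤ out D := fun D => hle_out D 0 fun C hC _ => hπ'.1 C hC
  have hout_eq : ∀ B ∈ 𝒜L, out (B \ F) = π' B - inn (B ∩ F) := by
    intro B hB
    have h1 : inn (B ∩ F) ≤ π' B - out (B \ F) := by
      refine hinn_sup_le _ _ fun C hC hCBF => ?_
      have hCB : C ⊆ B := fun ω hω => (hCBF hω).1
      have hBC : B \ C ∈ 𝒜L := h𝒜L.diff_mem' hB hC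
      have hsub : B \ F ⊆ B \ C := fun ω hω => ⟨hω.1, fun hωC => hω.2 (hCBF hωC).2⟩
      have h2 : out (B \ F) ≤ π' (B \ C) := hout_le _ _ hBC hsub
      have h3 : π' B = π' C + π' (B \ C) := by
        have := hπ'.2 C hC (B \ C) hBC Set.disjoint_sdiff_right
        rwa [Set.union_diff_cancel hCB] at this
      linarith
    have h2 : π' B - inn (B ∩ F) ≤ out (B \ F) := by
      refine hle_out _ _ fun C' hC' hsub => ?_
      have hsub2 : B \ C' ⊆ B ∩ F := by
        intro ω hω
        refine ⟨hω.1, ?_⟩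
        by_contra hF
        exact hω.2 (hsub ⟨hω.1, hF⟩)
      have h3 : π' (B \ C') ≤ inn (B ∩ F) := hinn_le _ _ (h𝒜L.diff_mem' hB hC') hsub2
      have h4 : π' B = π' (B ∩ C') + π' (B \ C') := hsplit B hB C' hC'
      have h5 : π' (B ∩ C') ≤ π' C' :=
        hπ'.mono' h𝒜L (h𝒜L.inter_mem' hB hC') hC' Set.inter_subset_right
      linarith
    linarith
  have hinn_add : ∀ B ∈ 𝒜L, ∀ B' ∈ 𝒜L, Disjoint (B ∩ F) (B' ∩ F) →
      inn ((B ∪ B') ∩ F) = inn (B ∩ F) + inn (B' ∩ F) := by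
    intro B hB B' hB' hdisj
    apply le_antisymm
    · refine hinn_sup_le _ _ fun C hC hCsub => ?_
      have h1 : π' C = π' (C ∩ B) + π' (C \ B) := hsplit C hC B hB
      have h2 : π' (C ∩ B) ≤ inn (B ∩ F) := by
        refine hinn_le _ _ (h𝒜L.inter_mem' hC hB) fun ω hω => ⟨hω.2, (hCsub hω.1).2⟩
      have h3 : π' (C \ B) ≤ inn (B' ∩ F) := by
        refine hinn_le _ _ (h𝒜L.diff_mem' hC hB) fun ω hω => ?_
        have hmem := hCsub hω.1
        rcases hmem.1 with hωB | hωB'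
        · exact absurd hωB hω.2
        · exact ⟨hωB', hmem.2⟩
      linarith
    · have hstep : ∀ C ∈ 𝒜L, C ⊆ B ∩ F → ∀ C' ∈ 𝒜L, C' ⊆ B' ∩ F →
          π' C + π' C' ≤ inn ((B ∪ B') ∩ F) := by
        intro C hC hCs C' hC' hCs'
        have hd : Disjoint C C' := hdisj.mono hCs hCs'
        have hCC' : π' (C ∪ C') = π' C + π' C' := hπ'.2 C hC C' hC' hd
        rw [← hCC']
        refine hinn_le _ _ (h𝒜L.2.2 _ hC _ hC') ?_
        refine Set.union_subset (hCs.trans ?_) (hCs'.trans ?_) <;>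
          exact Set.inter_subset_inter_left _ (by simp)
      have h1 : ∀ C ∈ 𝒜L, C ⊆ B ∩ F → π' C + inn (B' ∩ F) ≤ inn ((B ∪ B') ∩ F) := by
        intro C hC hCs
        have := hinn_sup_le (B' ∩ F) (inn ((B ∪ B') ∩ F) - π' C)
          (fun C' hC' hCs' => by linarith [hstep C hC hCs C' hC' hCs'])
        linarith
      have h2 := hinn_sup_le (B ∩ F) (inn ((B ∪ B') ∩ F) - inn (B' ∩ F))
        (fun C hC hCs => by linarith [h1 C hC hCs])
      linarith
  have hinn_empty : inn ∅ = 0 :=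
    le_antisymm (hinn_sup_le ∅ 0 fun C hC hCs => by
      rw [Set.subset_empty_iff.1 hCs, hempty]) (hinn_nonneg ∅)
  -- the generated field and the canonical extension on it
  set 𝒢 : Set (Set Ω) := {A | ∃ B₁ ∈ 𝒜L, ∃ B₂ ∈ 𝒜L, A = (B₁ ∩ F) ∪ (B₂ \ F)} with h𝒢def
  have h𝒜L𝒢 : ∀ B ∈ 𝒜L, B ∈ 𝒢 := fun B hB => ⟨B, hB, B, hB, (Set.inter_union_diff B F).symm⟩
  have hF𝒢 : F ∈ 𝒢 := ⟨Set.univ, h𝒜L.1, ∅, h𝒜L.empty_mem', by simp⟩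
  have h𝒢field : IsSetField 𝒢 := by
    refine ⟨h𝒜L𝒢 _ h𝒜L.1, ?_, ?_⟩
    · rintro A ⟨B₁, hB₁, B₂, hB₂, rfl⟩
      refine ⟨B₁ᶜ, h𝒜L.2.1 _ hB₁, B₂ᶜ, h𝒜L.2.1 _ hB₂, ?_⟩
      ext ω
      by_cases hω : ω ∈ F <;> simp [hω]
    · rintro A ⟨B₁, hB₁, B₂, hB₂, rfl⟩ A' ⟨B₁', hB₁', B₂', hB₂', rfl⟩
      refine ⟨B₁ ∪ B₁', h𝒜L.2.2 _ hB₁ _ hB₁', B₂ ∪ B₂', h𝒜L.2.2 _ hB₂ _ hB₂', ?_⟩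
      ext ω
      by_cases hω : ω ∈ F <;> simp [hω] <;> tauto
  have hrepF : ∀ B₁ B₂ : Set Ω, ((B₁ ∩ F) ∪ (B₂ \ F)) ∩ F = B₁ ∩ F := by
    intro B₁ B₂
    ext ω
    by_cases hω : ω ∈ F <;> simp [hω]
  have hrepFc : ∀ B₁ B₂ : Set Ω, ((B₁ ∩ F) ∪ (B₂ \ F)) \ F = B₂ \ F := by
    intro B₁ B₂
    ext ω
    by_cases hω : ω ∈ F <;> simp [hω]
  set ρ₀ : Set Ω → ℝ := fun A => inn (A ∩ F) + out (A \ F) with hρ₀def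
  have hout_empty : out ∅ = 0 := by
    have := hout_eq ∅ h𝒜L.empty_mem'
    simpa [hempty, hinn_empty] using this
  have hρ₀L : ∀ B ∈ 𝒜L, ρ₀ B = π' B := by
    intro B hB
    rw [hρ₀def]
    simp only
    rw [hout_eq B hB]
    ring
  have hρ₀F : ρ₀ F = inn F := by
    rw [hρ₀def]
    simp only [Set.inter_self, Set.diff_self, hout_empty, add_zero]
  have hρ₀nn : ∀ A, 0 ≤ ρ₀ A := fun A => add_nonneg (hinn_nonneg _) (hout_nonneg _)
  have hρ₀univ : ρ₀ Set.univ = t := by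
    have h1 := hout_eq Set.univ h𝒜L.1
    rw [Set.univ_inter] at h1
    rw [hρ₀def]
    simp only
    rw [Set.univ_inter, h1]
    ring
  have hout_add : ∀ B₂ ∈ 𝒜L, ∀ B₂' ∈ 𝒜L, Disjoint (B₂ \ F) (B₂' \ F) →
      out ((B₂ \ F) ∪ (B₂' \ F)) = out (B₂ \ F) + out (B₂' \ F) := by
    intro B₂ hB₂ B₂' hB₂' hd
    set B'' := B₂' \ B₂ with hB''def
    have hB'' : B'' ∈ 𝒜L := h𝒜L.diff_mem' hB₂' hB₂
    have hD : B₂' \ F = B'' \ F := by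
      ext ω
      constructor
      · intro hω
        refine ⟨⟨hω.1, fun hωB₂ => ?_⟩, hω.2⟩
        exact (Set.disjoint_left.1 hd) ⟨hωB₂, hω.2⟩ hω
      · intro hω
        exact ⟨hω.1.1, hω.2⟩
    have hdd : Disjoint B₂ B'' := Set.disjoint_sdiff_right
    have hu : (B₂ \ F) ∪ (B'' \ F) = (B₂ ∪ B'') \ F := (Set.union_diff_distrib).symm
    rw [hD, hu, hout_eq _ (h𝒜L.2.2 _ hB₂ _ hB''), hout_eq _ hB₂, hout_eq _ hB'',
      hπ'.2 _ hB₂ _ hB'' hdd,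
      hinn_add B₂ hB₂ B'' hB''
        (hdd.mono Set.inter_subset_left Set.inter_subset_left)]
    ring
  have hρ₀add : AddOn 𝒢 ρ₀ := by
    refine ⟨fun A _ => hρ₀nn A, ?_⟩
    rintro A hA A' hA' hdisj
    obtain ⟨B₁, hB₁, B₂, hB₂, rfl⟩ := hA
    obtain ⟨B₁', hB₁', B₂', hB₂', rfl⟩ := hA'
    have hAF : ((B₁ ∩ F) ∪ (B₂ \ F)) ∩ F = B₁ ∩ F := hrepF _ _
    have hAF' : ((B₁' ∩ F) ∪ (B₂' \ F)) ∩ F = B₁' ∩ F := hrepF _ _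
    have hAFc : ((B₁ ∩ F) ∪ (B₂ \ F)) \ F = B₂ \ F := hrepFc _ _
    have hAFc' : ((B₁' ∩ F) ∪ (B₂' \ F)) \ F = B₂' \ F := hrepFc _ _
    have hd1 : Disjoint (B₁ ∩ F) (B₁' ∩ F) :=
      hdisj.mono Set.subset_union_left Set.subset_union_left
    have hd2 : Disjoint (B₂ \ F) (B₂' \ F) :=
      hdisj.mono Set.subset_union_right Set.subset_union_right
    have hU : (((B₁ ∩ F) ∪ (B₂ \ F)) ∪ ((B₁' ∩ F) ∪ (B₂' \ F))) ∩ F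
        = (B₁ ∪ B₁') ∩ F := by
      rw [Set.union_inter_distrib_right, hAF, hAF', ← Set.union_inter_distrib_right]
    have hUc : (((B₁ ∩ F) ∪ (B₂ \ F)) ∪ ((B₁' ∩ F) ∪ (B₂' \ F))) \ F
        = (B₂ \ F) ∪ (B₂' \ F) := by
      rw [Set.union_diff_distrib, hAFc, hAFc']
    rw [hρ₀def]
    simp only
    rw [hU, hUc, hAF, hAF', hAFc, hAFc', hinn_add B₁ hB₁ B₁' hB₁' hd1,
      hout_add B₂ hB₂ B₂' hB₂' hd2]
    ring
  -- Hahn–Banach extension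
  set Bdd : Submodule ℝ (Ω → ℝ) :=
    { carrier := {x | ∃ M, ∀ ω, |x ω| ≤ M}
      add_mem' := by
        rintro x y ⟨M, hM⟩ ⟨M', hM'⟩
        exact ⟨M + M', fun ω => (abs_add_le _ _).trans (add_le_add (hM ω) (hM' ω))⟩
      zero_mem' := ⟨0, fun ω => by simp⟩
      smul_mem' := by
        rintro c x ⟨M, hM⟩
        exact ⟨|c| * M, fun ω => by
          rw [Pi.smul_apply, smul_eq_mul, abs_mul]
          exact mul_le_mul_of_nonneg_left (hM ω) (abs_nonneg c)⟩ } with hBdd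
  set indE : Set Ω → Bdd := fun A =>
    ⟨fun ω => if ω ∈ A then (1:ℝ) else 0, 1, fun ω => by by_cases h : ω ∈ A <;> simp [h]⟩ with hindE
  set N : Bdd → ℝ := fun x => t * sSup (Set.range (x : Ω → ℝ)) with hN
  have hrange_ne : ∀ x : Bdd, (Set.range (x : Ω → ℝ)).Nonempty := fun x => Set.range_nonempty _
  have hrange_bdd : ∀ x : Bdd, BddAbove (Set.range (x : Ω → ℝ)) := by
    rintro ⟨x, M, hM⟩
    exact ⟨M, by rintro y ⟨ω, rfl⟩; exact (abs_le.1 (hM ω)).2⟩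
  have hsSup_le : ∀ (x : Bdd) (y : ℝ), (∀ ω, (x : Ω → ℝ) ω ≤ y) →
      sSup (Set.range (x : Ω → ℝ)) ≤ y := by
    intro x y hy
    refine csSup_le (hrange_ne x) ?_
    rintro z ⟨ω, rfl⟩
    exact hy ω
  have hle_sSup : ∀ (x : Bdd) (ω : Ω), (x : Ω → ℝ) ω ≤ sSup (Set.range (x : Ω → ℝ)) :=
    fun x ω => le_csSup (hrange_bdd x) ⟨ω, rfl⟩
  have N_add : ∀ x y : Bdd, N (x + y) ≤ N x + N y := by
    intro x y
    rw [hN]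
    simp only
    rw [← mul_add]
    refine mul_le_mul_of_nonneg_left ?_ ht0
    refine hsSup_le _ _ fun ω => ?_
    have : ((x + y : Bdd) : Ω → ℝ) ω = (x : Ω → ℝ) ω + (y : Ω → ℝ) ω := rfl
    rw [this]
    exact add_le_add (hle_sSup x ω) (hle_sSup y ω)
  have N_hom : ∀ c : ℝ, 0 < c → ∀ x : Bdd, N (c • x) = c * N x := by
    intro c hc x
    have hkey : sSup (Set.range ((c • x : Bdd) : Ω → ℝ)) =
        c * sSup (Set.range (x : Ω → ℝ)) := by
      apply le_antisymm
      · refine hsSup_le _ _ fun ω => ?_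
        have : ((c • x : Bdd) : Ω → ℝ) ω = c * (x : Ω → ℝ) ω := rfl
        rw [this]
        exact mul_le_mul_of_nonneg_left (hle_sSup x ω) hc.le
      · rw [mul_comm]
        rw [← le_div_iff₀ hc]
        refine hsSup_le _ _ fun ω => ?_
        rw [le_div_iff₀ hc, mul_comm]
        have : c * (x : Ω → ℝ) ω = ((c • x : Bdd) : Ω → ℝ) ω := rfl
        rw [this]
        exact hle_sSup _ ω
    rw [hN]
    simp only
    rw [hkey]
    ring
  set Φ : ({G : Set Ω // G ∈ 𝒢} →₀ ℝ) →ₗ[ℝ] Bdd :=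
    Finsupp.linearCombination ℝ (fun G : {G : Set Ω // G ∈ 𝒢} => indE G.val) with hΦ
  set L : ({G : Set Ω // G ∈ 𝒢} →₀ ℝ) →ₗ[ℝ] ℝ :=
    Finsupp.linearCombination ℝ (fun G : {G : Set Ω // G ∈ 𝒢} => ρ₀ G.val) with hL
  have hbridge : ∀ z : {G : Set Ω // G ∈ 𝒢} →₀ ℝ, L z ≤ N (Φ z) := by
    intro z
    have hLz : L z = ∑ G ∈ z.support, z G * ρ₀ G.val := by
      rw [hL, Finsupp.linearCombination_apply, Finsupp.sum]
      exact Finset.sum_congr rfl fun G _ => rfl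
    have hΦz : ∀ ω, ((Φ z : Bdd) : Ω → ℝ) ω =
        ∑ G ∈ z.support, z G * (if ω ∈ G.val then (1:ℝ) else 0) := by
      intro ω
      rw [hΦ, Finsupp.linearCombination_apply, Finsupp.sum]
      have : ((∑ G ∈ z.support, z G • indE G.val : Bdd) : Ω → ℝ) ω =
          ∑ G ∈ z.support, ((z G • indE G.val : Bdd) : Ω → ℝ) ω := by
        rw [AddSubmonoidClass.coe_finset_sum]
        simp
      rw [this]
      refine Finset.sum_congr rfl fun G _ => ?_
      simp [hindE]
    rw [hLz, hN]
    simp only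
    have hfun : (fun ω => ∑ G ∈ z.support, z G * (if ω ∈ G.val then (1:ℝ) else 0)) =
        ((Φ z : Bdd) : Ω → ℝ) := by
      funext ω
      rw [hΦz ω]
    calc ∑ G ∈ z.support, z G * ρ₀ G.val
        ≤ ρ₀ Set.univ * sSup (Set.range fun ω =>
            ∑ G ∈ z.support, z G * (if ω ∈ G.val then (1:ℝ) else 0)) :=
          key_dutch h𝒢field hρ₀add z.support (fun G => G.val) (fun G _ => G.2) z
      _ = t * sSup (Set.range ((Φ z : Bdd) : Ω → ℝ)) := by rw [hρ₀univ, hfun]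
  have hN0 : N 0 = 0 := by
    rw [hN]
    simp only
    have : ((0 : Bdd) : Ω → ℝ) = fun _ => 0 := rfl
    rw [this]
    rw [Set.range_const, csSup_singleton]
    ring
  have hker : LinearMap.ker Φ ≤ LinearMap.ker L := by
    intro z hz
    rw [LinearMap.mem_ker] at hz ⊢
    have h1 : L z ≤ 0 := by
      have := hbridge z
      rwa [hz, hN0] at this
    have h2 : -(L z) ≤ 0 := by
      have := hbridge (-z)
      rwa [map_neg, map_neg, hz, neg_zero, hN0] at this
    linarith
  set f0 : (↥(LinearMap.range Φ)) →ₗ[ℝ] ℝ :=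
    ((LinearMap.ker Φ).liftQ L hker).comp (LinearMap.quotKerEquivRange Φ).symm.toLinearMap
    with hf0
  have heval : ∀ z : {G : Set Ω // G ∈ 𝒢} →₀ ℝ,
      f0 ⟨Φ z, LinearMap.mem_range_self Φ z⟩ = L z := by
    intro z
    have h1 : (LinearMap.quotKerEquivRange Φ) (Submodule.Quotient.mk z) =
        ⟨Φ z, LinearMap.mem_range_self Φ z⟩ := by
      apply Subtype.ext
      exact LinearMap.quotKerEquivRange_apply_mk Φ z
    rw [hf0]
    simp only [LinearMap.comp_apply, LinearEquiv.coe_toLinearMap]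
    rw [← h1, LinearEquiv.symm_apply_apply, Submodule.liftQ_apply]
  set fpm : Bdd →ₗ.[ℝ] ℝ := ⟨LinearMap.range Φ, f0⟩ with hfpm
  have hdom : ∀ x : fpm.domain, fpm x ≤ N x := by
    rintro ⟨x, hx⟩
    obtain ⟨z, hz⟩ := hx
    subst hz
    have h1 : fpm ⟨Φ z, LinearMap.mem_range_self Φ z⟩ = L z := heval z
    rw [h1]
    exact hbridge z
  obtain ⟨g, hg_eq, hg_le⟩ := exists_extension_of_le_sublinear fpm N N_hom N_add hdom
  have hg_val : ∀ (G : Set Ω) (hG : G ∈ 𝒢), g (indE G) = ρ₀ G := by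
    intro G hG
    have hz : Φ (Finsupp.single ⟨G, hG⟩ 1) = indE G := by
      rw [hΦ, Finsupp.linearCombination_single, one_smul]
    have hmem : indE G ∈ fpm.domain := by
      rw [← hz]
      exact LinearMap.mem_range_self Φ _
    have h1 := hg_eq ⟨indE G, hmem⟩
    have h2 : fpm ⟨indE G, hmem⟩ = L (Finsupp.single ⟨G, hG⟩ 1) := by
      have : (⟨indE G, hmem⟩ : fpm.domain) =
          ⟨Φ (Finsupp.single ⟨G, hG⟩ 1), LinearMap.mem_range_self Φ _⟩ :=
        Subtype.ext hz.symm
      rw [this]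
      exact heval _
    have h3 : L (Finsupp.single ⟨G, hG⟩ 1) = ρ₀ G := by
      rw [hL, Finsupp.linearCombination_single, smul_eq_mul, one_mul]
    rw [h1, h2, h3]
  refine ⟨fun A => g (indE A), ?_, ?_, ?_, ?_⟩
  · intro A
    have h1 : g (-(indE A)) ≤ N (-(indE A)) := hg_le _
    have h2 : N (-(indE A)) ≤ 0 := by
      rw [hN]
      simp only
      have hs : sSup (Set.range ((-(indE A) : Bdd) : Ω → ℝ)) ≤ 0 := by
        refine hsSup_le _ _ fun ω => ?_
        have hval : ((-(indE A) : Bdd) : Ω → ℝ) ω = -(if ω ∈ A then (1:ℝ) else 0) := by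
          simp [hindE]
        rw [hval]
        split <;> norm_num
      have := mul_le_mul_of_nonneg_left hs ht0
      simpa using this
    rw [map_neg] at h1
    linarith
  · intro A B hd
    have hind : indE (A ∪ B) = indE A + indE B := by
      apply Subtype.ext
      funext ω
      have h1 : ((indE (A ∪ B) : Bdd) : Ω → ℝ) ω = if ω ∈ A ∪ B then (1:ℝ) else 0 := by
        simp [hindE]
      have h2 : ((indE A + indE B : Bdd) : Ω → ℝ) ω =
          (if ω ∈ A then (1:ℝ) else 0) + (if ω ∈ B then (1:ℝ) else 0) := by
        simp [hindE]
      rw [h1, h2]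
      by_cases hA : ω ∈ A
      · have hB : ω ∉ B := fun hB => Set.disjoint_left.1 hd hA hB
        simp [hA, hB]
      · by_cases hB : ω ∈ B <;> simp [hA, hB]
    show g (indE (A ∪ B)) = g (indE A) + g (indE B)
    rw [hind, map_add]
  · intro B hB
    show g (indE B) = π' B
    rw [hg_val B (h𝒜L𝒢 B hB), hρ₀L B hB]
  · show g (indE F) = sSup {x | ∃ C ∈ 𝒜L, C ⊆ F ∧ x = π' C}
    rw [hg_val F hF𝒢, hρ₀F]

/-- The layered construction of a full conditional probability extending a given
unconditional probability `ν` and a strategy `σ`. -/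
lemma layered_fcp {Ω ι : Type*} {𝒜 : Set (Set Ω)} {H : ι → Set Ω} {σ : Set Ω → ι → ℝ}
    (h𝒜 : IsSetField 𝒜) (hH : IsPartition H) (hHmem : ∀ i, H i ∈ 𝒜)
    (hσ : IsStrategy 𝒜 H σ) (ν : Set Ω → ℝ) (hν : AddOn 𝒜 ν) (hν1 : ν Set.univ = 1)
    (hνH : ∀ i, ∀ A ∈ 𝒜, ν (A ∩ H i) = σ A i * ν (H i)) :
    ∃ P : Set Ω → Set Ω → ℝ, IsFCP 𝒜 P ∧ (∀ B ∈ 𝒜, P B Set.univ = ν B) ∧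
      (∀ F ∈ 𝒜, ∀ i, P F (H i) = σ F i) := by
  classical
  have hσfap : ∀ i, IsFAP 𝒜 (fun A => σ A i) := fun i => (hσ i).1
  have hσmono : ∀ (i : ι), ∀ A ∈ 𝒜, ∀ B ∈ 𝒜, A ⊆ B → σ A i ≤ σ B i :=
    fun i A hA B hB hAB => ((hσfap i).addOn).mono' h𝒜 hA hB hAB
  have hσnn : ∀ (i : ι), ∀ A ∈ 𝒜, 0 ≤ σ A i := fun i A hA => ((hσfap i).1 A hA).1
  have hσHi : ∀ i, σ (H i) i = 1 := fun i => (hσ i).2 (H i) (hHmem i) subset_rfl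
  have hσcompl : ∀ i, σ ((H i)ᶜ) i = 0 := by
    intro i
    have hadd := (hσfap i).2.2 (H i) (hHmem i) ((H i)ᶜ) (h𝒜.2.1 _ (hHmem i))
      disjoint_compl_right
    rw [Set.union_compl_self] at hadd
    simp only at hadd
    have h1 : σ Set.univ i = 1 := (hσfap i).2.1
    rw [h1, hσHi i] at hadd
    linarith
  have hσ_sub_compl : ∀ (i : ι), ∀ A ∈ 𝒜, A ⊆ (H i)ᶜ → σ A i = 0 := by
    intro i A hA hsub
    have h1 := hσmono i A hA ((H i)ᶜ) (h𝒜.2.1 _ (hHmem i)) hsub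
    have h2 := hσnn i A hA
    rw [hσcompl i] at h1
    linarith
  have hσ_inter : ∀ (i : ι), ∀ A ∈ 𝒜, σ (A ∩ H i) i = σ A i := by
    intro i A hA
    have hd : Disjoint (A ∩ H i) (A \ H i) :=
      (Set.disjoint_sdiff_right (s := H i) (t := A)).mono_left Set.inter_subset_right
    have h1 := (hσfap i).2.2 (A ∩ H i) (h𝒜.inter_mem' hA (hHmem i)) (A \ H i)
      (h𝒜.diff_mem' hA (hHmem i)) hd
    rw [Set.inter_union_diff] at h1
    simp only at h1
    have h2 : σ (A \ H i) i = 0 :=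
      hσ_sub_compl i _ (h𝒜.diff_mem' hA (hHmem i)) fun ω hω => hω.2
    rw [h2] at h1
    linarith
  have wfι : WellFounded (@WellOrderingRel ι) := IsWellFounded.wf
  have wfΩ : WellFounded (@WellOrderingRel Ω) := IsWellFounded.wf
  set m : Set Ω → Set Ω → ℝ := fun K =>
    if 0 < ν K then ν
    else if h1 : ∃ i, 0 < σ K i then fun A => σ A (wfι.min {i | 0 < σ K i} h1)
    else if h2 : K.Nonempty then fun A => if wfΩ.min K h2 ∈ A then (1:ℝ) else 0
    else fun _ => 0
    with hm
  have hm_tier0 : ∀ K, 0 < ν K → m K = ν := by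
    intro K h
    rw [hm]
    simp only [if_pos h]
  have hm_tier1 : ∀ (K : Set Ω) (h : ¬ 0 < ν K) (h1 : ∃ i, 0 < σ K i),
      m K = fun A => σ A (wfι.min {i | 0 < σ K i} h1) := by
    intro K h h1
    rw [hm]
    simp only [if_neg h, dif_pos h1]
  have hm_tier2 : ∀ (K : Set Ω) (h : ¬ 0 < ν K) (h1 : ¬ ∃ i, 0 < σ K i)
      (h2 : K.Nonempty), m K = fun A => if wfΩ.min K h2 ∈ A then (1:ℝ) else 0 := by
    intro K h h1 h2
    rw [hm]
    simp only [if_neg h, dif_neg h1, dif_pos h2]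
  have hm_addOn : ∀ K, AddOn 𝒜 (m K) := by
    intro K
    rw [hm]
    simp only
    split_ifs with hν' h1 h2
    · exact hν
    · exact (hσfap _).addOn
    · constructor
      · intro A _
        by_cases hA : wfΩ.min K h2 ∈ A <;> simp [hA]
      · intro A _ B _ hd
        by_cases hA : wfΩ.min K h2 ∈ A
        · have hB : wfΩ.min K h2 ∉ B := fun hB => Set.disjoint_left.1 hd hA hB
          simp [hA, hB]
        · by_cases hB : wfΩ.min K h2 ∈ B <;> simp [hA, hB]
    · exact ⟨fun A _ => le_refl 0, fun A _ B _ _ => by norm_num⟩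
  have hm_mono : ∀ (K : Set Ω), ∀ A ∈ 𝒜, ∀ B ∈ 𝒜, A ⊆ B → m K A ≤ m K B :=
    fun K A hA B hB hAB => (hm_addOn K).mono' h𝒜 hA hB hAB
  have hm_nonneg : ∀ (K : Set Ω), ∀ A ∈ 𝒜, 0 ≤ m K A := fun K => (hm_addOn K).1
  have hm_pos : ∀ K : Set Ω, K.Nonempty → 0 < m K K := by
    intro K hKne
    by_cases hν' : 0 < ν K
    · rw [hm_tier0 K hν']
      exact hν'
    · by_cases h1 : ∃ i, 0 < σ K i
      · rw [hm_tier1 K hν' h1]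
        exact wfι.min_mem {i | 0 < σ K i} h1
      · rw [hm_tier2 K hν' h1 hKne]
        simp only [if_pos (wfΩ.min_mem K hKne)]
        norm_num
  have hcoh : ∀ K ∈ 𝒜, ∀ E ∈ 𝒜, 0 < m K (E ∩ K) → m (E ∩ K) = m K := by
    intro K hK E hE hpos
    have hEK𝒜 : E ∩ K ∈ 𝒜 := h𝒜.inter_mem' hE hK
    by_cases hν' : 0 < ν K
    · rw [hm_tier0 K hν'] at hpos
      rw [hm_tier0 K hν', hm_tier0 (E ∩ K) hpos]
    · have hνK0 : ν K = 0 := le_antisymm (not_lt.1 hν') (hν.1 K hK)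
      have hνEK : ¬ 0 < ν (E ∩ K) := by
        have h2 := hν.mono' h𝒜 hEK𝒜 hK Set.inter_subset_right
        rw [hνK0] at h2
        exact not_lt.2 h2
      by_cases h1 : ∃ i, 0 < σ K i
      · rw [hm_tier1 K hν' h1] at hpos
        have h1' : ∃ i, 0 < σ (E ∩ K) i := ⟨_, hpos⟩
        have hi1K : 0 < σ K (wfι.min {i | 0 < σ (E ∩ K) i} h1') := by
          refine lt_of_lt_of_le (wfι.min_mem {i | 0 < σ (E ∩ K) i} h1') ?_
          exact hσmono _ _ hEK𝒜 _ hK Set.inter_subset_right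
        have heq : wfι.min {i | 0 < σ (E ∩ K) i} h1' = wfι.min {i | 0 < σ K i} h1 := by
          have hn1 : ¬ WellOrderingRel (wfι.min {i | 0 < σ (E ∩ K) i} h1')
              (wfι.min {i | 0 < σ K i} h1) := wfι.not_lt_min _ hi1K
          have hn2 : ¬ WellOrderingRel (wfι.min {i | 0 < σ K i} h1)
              (wfι.min {i | 0 < σ (E ∩ K) i} h1') := wfι.not_lt_min _ hpos
          rcases trichotomous_of WellOrderingRel (wfι.min {i | 0 < σ (E ∩ K) i} h1')
            (wfι.min {i | 0 < σ K i} h1) with h | h | h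
          exacts [absurd h hn1, h, absurd h hn2]
        rw [hm_tier1 K hν' h1, hm_tier1 (E ∩ K) hνEK h1', heq]
      · have hKne : K.Nonempty := by
          by_contra hKe
          rw [hm] at hpos
          simp only [if_neg hν', dif_neg h1, dif_neg hKe] at hpos
          exact lt_irrefl 0 hpos
        rw [hm_tier2 K hν' h1 hKne] at hpos
        have hω0EK : wfΩ.min K hKne ∈ E ∩ K := by
          by_contra hc
          simp only [if_neg hc] at hpos
          exact lt_irrefl 0 hpos
        have hEKne : (E ∩ K).Nonempty := ⟨_, hω0EK⟩
        have h1' : ¬ ∃ i, 0 < σ (E ∩ K) i := by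
          rintro ⟨i, hi⟩
          exact h1 ⟨i, lt_of_lt_of_le hi (hσmono i _ hEK𝒜 _ hK Set.inter_subset_right)⟩
        have hω1K : wfΩ.min (E ∩ K) hEKne ∈ K := (wfΩ.min_mem (E ∩ K) hEKne).2
        have heq : wfΩ.min (E ∩ K) hEKne = wfΩ.min K hKne := by
          have hn1 : ¬ WellOrderingRel (wfΩ.min (E ∩ K) hEKne) (wfΩ.min K hKne) :=
            wfΩ.not_lt_min _ hω1K
          have hn2 : ¬ WellOrderingRel (wfΩ.min K hKne) (wfΩ.min (E ∩ K) hEKne) :=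
            wfΩ.not_lt_min _ hω0EK
          rcases trichotomous_of WellOrderingRel (wfΩ.min (E ∩ K) hEKne)
            (wfΩ.min K hKne) with h | h | h
          exacts [absurd h hn1, h, absurd h hn2]
        rw [hm_tier2 K hν' h1 hKne, hm_tier2 (E ∩ K) hνEK h1' hEKne, heq]
  refine ⟨fun E K => m K (E ∩ K) / m K K, ⟨?_, ?_, ?_⟩, ?_, ?_⟩
  · -- C1
    intro E hE K hK hKne
    show m K (E ∩ K) / m K K = m K ((E ∩ K) ∩ K) / m K K
    rw [Set.inter_assoc, Set.inter_self]
  · -- C2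
    intro K hK hKne
    have hKK := hm_pos K hKne
    refine ⟨fun A hA => ⟨?_, ?_⟩, ?_, ?_⟩
    · show 0 ≤ m K (A ∩ K) / m K K
      exact div_nonneg (hm_nonneg K _ (h𝒜.inter_mem' hA hK)) hKK.le
    · show m K (A ∩ K) / m K K ≤ 1
      rw [div_le_one hKK]
      exact hm_mono K _ (h𝒜.inter_mem' hA hK) _ hK Set.inter_subset_right
    · show m K (Set.univ ∩ K) / m K K = 1
      rw [Set.univ_inter]
      exact div_self hKK.ne'
    · intro A hA B hB hd
      show m K ((A ∪ B) ∩ K) / m K K = m K (A ∩ K) / m K K + m K (B ∩ K) / m K K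
      rw [Set.union_inter_distrib_right,
        (hm_addOn K).2 _ (h𝒜.inter_mem' hA hK) _ (h𝒜.inter_mem' hB hK)
          (hd.mono Set.inter_subset_left Set.inter_subset_left), add_div]
  · -- C3
    intro E hE Fq hFq K hK hKne hEKne
    have ha := hm_pos K hKne
    have hEK𝒜 : E ∩ K ∈ 𝒜 := h𝒜.inter_mem' hE hK
    have hset1 : (E ∩ Fq) ∩ K = Fq ∩ (E ∩ K) := by
      ext ω
      simp only [Set.mem_inter_iff]
      tauto
    by_cases hpos : 0 < m K (E ∩ K)
    · have hco := hcoh K hK E hE hpos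
      show m K ((E ∩ Fq) ∩ K) / m K K = _ * (m (E ∩ K) (Fq ∩ (E ∩ K)) / m (E ∩ K) (E ∩ K))
      rw [hco, hset1]
      field_simp
    · have h0 : m K (E ∩ K) = 0 := le_antisymm (not_lt.1 hpos) (hm_nonneg K _ hEK𝒜)
      have hEF : m K ((E ∩ Fq) ∩ K) = 0 := by
        refine le_antisymm ?_ (hm_nonneg K _ (h𝒜.inter_mem' (h𝒜.inter_mem' hE hFq) hK))
        rw [← h0]
        refine hm_mono K _ (h𝒜.inter_mem' (h𝒜.inter_mem' hE hFq) hK) _ hEK𝒜 ?_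
        rw [hset1]
        exact Set.inter_subset_right
      show m K ((E ∩ Fq) ∩ K) / m K K = (m K (E ∩ K) / m K K) * _
      rw [hEF, h0]
      simp
  · -- extends prior at univ
    intro B hB
    have hνuniv : 0 < ν Set.univ := by rw [hν1]; norm_num
    show m Set.univ (B ∩ Set.univ) / m Set.univ Set.univ = ν B
    rw [hm_tier0 _ hνuniv, Set.inter_univ, hν1, div_one]
  · -- extends strategy
    intro Fq hFq i
    show m (H i) (Fq ∩ H i) / m (H i) (H i) = σ Fq i
    by_cases hpos : 0 < ν (H i)
    · rw [hm_tier0 _ hpos, hνH i Fq hFq]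
      exact mul_div_cancel_right₀ _ hpos.ne'
    · have h1 : ∃ j, 0 < σ (H i) j := ⟨i, by rw [hσHi i]; norm_num⟩
      have hmin : wfι.min {j | 0 < σ (H i) j} h1 = i := by
        by_contra hne
        have hmem : 0 < σ (H i) (wfι.min {j | 0 < σ (H i) j} h1) :=
          wfι.min_mem {j | 0 < σ (H i) j} h1
        have hz : σ (H i) (wfι.min {j | 0 < σ (H i) j} h1) = 0 := by
          refine hσ_sub_compl _ (H i) (hHmem i) ?_
          have hd : Disjoint (H i) (H (wfι.min {j | 0 < σ (H i) j} h1)) :=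
            hH.2.1 fun he => hne (he ▸ rfl)
          exact fun ω hω hω' => Set.disjoint_left.1 hd hω hω'
        rw [hz] at hmem
        exact lt_irrefl 0 hmem
      rw [hm_tier1 (H i) hpos h1]
      simp only [hmin]
      rw [hσ_inter i Fq hFq, hσHi i, div_one]

end Aux

/-- closed form of the lower joint probability `P^j_*` as a supremum over
finite partitions `{H_{i₁},…,H_{iₙ}} ∪ {B₁,…,B_t} ⊆ 𝒜L` of `Ω`. -/
theorem statement1 {Ω ι κ : Type*} [Nonempty Ω] (H : ι → Set Ω) (E : κ → Set Ω)
    (𝒜L 𝒜E 𝒜 : Set (Set Ω))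
    (hH : IsPartition H) (hE : IsPartition E)
    (h𝒜L : IsFieldOver H 𝒜L) (h𝒜E : IsFieldOver E 𝒜E)
    (h𝒜 : IsJointField H E 𝒜L 𝒜E 𝒜)
    (π : Set Ω → ℝ) (hπ : IsFAP 𝒜L π)
    (σ : Set Ω → ι → ℝ) (hσ : IsStrategy 𝒜 H σ)
    (F : Set Ω) (hF : F ∈ 𝒜) :
    lowEnv (FCPSet 𝒜 𝒜L H π σ) F Set.univ =
      sSup {x | ∃ (s : Finset ι) (T : Finset (Set Ω)),
        (↑T : Set (Set Ω)) ⊆ 𝒜L ∧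
        (∀ B ∈ T, (B : Set Ω).Nonempty) ∧
        (∀ B ∈ T, ∀ B' ∈ T, B ≠ B' → Disjoint B B') ∧
        (∀ i ∈ s, ∀ B ∈ T, Disjoint (H i) B) ∧
        ((⋃ i ∈ s, H i) ∪ ⋃₀ (↑T : Set (Set Ω)) = Set.univ) ∧
        x = (∑ i ∈ s, σ F i * π (H i)) + ∑ B ∈ T, if B ⊆ F then π B else 0} := by
  classical
  obtain ⟨h𝒜f, h𝒜Lsub, h𝒜Esub, -⟩ := h𝒜
  have h𝒜Lf : IsSetField 𝒜L := h𝒜L.1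
  have hHmemL : ∀ i, H i ∈ 𝒜L := h𝒜L.2.1
  have hHmem : ∀ i, H i ∈ 𝒜 := fun i => h𝒜Lsub (hHmemL i)
  have hHne : ∀ i, (H i).Nonempty := hH.1
  have hπadd : AddOn 𝒜L π := hπ.addOn
  have hπnn : ∀ B ∈ 𝒜L, 0 ≤ π B := hπadd.1
  have hσfap : ∀ i, IsFAP 𝒜 (fun A => σ A i) := fun i => (hσ i).1
  have hσnn : ∀ (i : ι), ∀ A ∈ 𝒜, 0 ≤ σ A i := fun i A hA => ((hσfap i).1 A hA).1
  have hσle1 : ∀ (i : ι), ∀ A ∈ 𝒜, σ A i ≤ 1 := fun i A hA => ((hσfap i).1 A hA).2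
  have hσmono : ∀ (i : ι), ∀ A ∈ 𝒜, ∀ B ∈ 𝒜, A ⊆ B → σ A i ≤ σ B i :=
    fun i A hA B hB hAB => ((hσfap i).addOn).mono' h𝒜f hA hB hAB
  have hσHi : ∀ i, σ (H i) i = 1 := fun i => (hσ i).2 (H i) (hHmem i) subset_rfl
  have hσcompl : ∀ i, σ ((H i)ᶜ) i = 0 := by
    intro i
    have hadd := (hσfap i).2.2 (H i) (hHmem i) ((H i)ᶜ) (h𝒜f.2.1 _ (hHmem i))
      disjoint_compl_right
    rw [Set.union_compl_self] at hadd
    simp only at hadd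
    have h1 : σ Set.univ i = 1 := (hσfap i).2.1
    rw [h1, hσHi i] at hadd
    linarith
  have hσ_subcompl : ∀ (i : ι), ∀ A ∈ 𝒜, A ⊆ (H i)ᶜ → σ A i = 0 := by
    intro i A hA hsub
    have h1 := hσmono i A hA ((H i)ᶜ) (h𝒜f.2.1 _ (hHmem i)) hsub
    have h2 := hσnn i A hA
    rw [hσcompl i] at h1
    linarith
  have hσ_inter : ∀ (i : ι), ∀ A ∈ 𝒜, σ (A ∩ H i) i = σ A i := by
    intro i A hA
    have hd : Disjoint (A ∩ H i) (A \ H i) :=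
      (Set.disjoint_sdiff_right (s := H i) (t := A)).mono_left Set.inter_subset_right
    have h1 := (hσfap i).2.2 (A ∩ H i) (h𝒜f.inter_mem' hA (hHmem i)) (A \ H i)
      (h𝒜f.diff_mem' hA (hHmem i)) hd
    rw [Set.inter_union_diff] at h1
    simp only at h1
    have h2 : σ (A \ H i) i = 0 :=
      hσ_subcompl i _ (h𝒜f.diff_mem' hA (hHmem i)) fun ω hω => hω.2
    rw [h2] at h1
    linarith
  -- dichotomy for members of 𝒜L
  have hdich : ∀ C ∈ 𝒜L, ∀ i : ι, H i ⊆ C ∨ C ∩ H i = ∅ := by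
    intro C hC i
    obtain ⟨S, rfl⟩ := h𝒜L.2.2 C hC
    by_cases hi : i ∈ S
    · exact Or.inl (Set.subset_biUnion_of_mem hi)
    · right
      rw [Set.eq_empty_iff_forall_notMem]
      rintro ω ⟨hωC, hωi⟩
      obtain ⟨i', hi', hωi'⟩ := Set.mem_iUnion₂.1 hωC
      have hne : i' ≠ i := fun he => hi (he ▸ hi')
      exact Set.disjoint_left.1 (hH.2.1 hne) hωi' hωi
  have hσL : ∀ C ∈ 𝒜L, ∀ i, σ C i = if H i ⊆ C then 1 else 0 := by
    intro C hC i
    by_cases hsub : H i ⊆ C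
    · rw [if_pos hsub]
      exact (hσ i).2 C (h𝒜Lsub hC) hsub
    · rw [if_neg hsub]
      rcases hdich C hC i with h | h
      · exact absurd h hsub
      · refine hσ_subcompl i C (h𝒜Lsub hC) fun ω hω hωi => ?_
        exact Set.eq_empty_iff_forall_notMem.1 h ω ⟨hω, hωi⟩
  have hπ_inter_L : ∀ C ∈ 𝒜L, ∀ i, π (C ∩ H i) = σ C i * π (H i) := by
    intro C hC i
    rcases hdich C hC i with h | h
    · rw [Set.inter_eq_self_of_subset_right h, hσL C hC i, if_pos h, one_mul]
    · rw [h, hπadd.empty' h𝒜Lf, hσL C hC i, if_neg ?_, zero_mul]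
      intro hsub
      obtain ⟨ω, hω⟩ := hHne i
      exact Set.eq_empty_iff_forall_notMem.1 h ω ⟨hsub hω, hω⟩
  -- summability
  have hπH_nonneg : ∀ i, 0 ≤ π (H i) := fun i => hπnn _ (hHmemL i)
  have hsum_base : Summable (fun i => π (H i)) := by
    refine summable_of_sum_le (c := 1) (fun i => hπH_nonneg i) fun u => ?_
    have h1 := hπadd.finsetSum h𝒜Lf u H (fun i _ => hHmemL i) (fun i _ j _ hij => hH.2.1 hij)
    rw [← h1]
    have hsub : (⋃ i ∈ u, H i) ∈ 𝒜L := h𝒜Lf.biUnion_mem' u H fun i _ => hHmemL i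
    calc π (⋃ i ∈ u, H i) ≤ π Set.univ :=
          hπadd.mono' h𝒜Lf hsub h𝒜Lf.1 (Set.subset_univ _)
      _ = 1 := hπ.2.1
  have hsummable : ∀ A ∈ 𝒜, Summable fun i => σ A i * π (H i) := by
    intro A hA
    refine Summable.of_nonneg_of_le
      (fun i => mul_nonneg (hσnn i A hA) (hπH_nonneg i)) (fun i => ?_) hsum_base
    calc σ A i * π (H i) ≤ 1 * π (H i) :=
          mul_le_mul_of_nonneg_right (hσle1 i A hA) (hπH_nonneg i)
      _ = π (H i) := one_mul _
  set μ₁ : Set Ω → ℝ := fun A => ∑' i, σ A i * π (H i) with hμ₁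
  have hμ₁_inter : ∀ A ∈ 𝒜, ∀ i, μ₁ (A ∩ H i) = σ A i * π (H i) := by
    intro A hA i
    rw [hμ₁]
    simp only
    rw [tsum_eq_single i ?_]
    · rw [hσ_inter i A hA]
    · intro j hji
      have hz : σ (A ∩ H i) j = 0 := by
        refine hσ_subcompl j _ (h𝒜f.inter_mem' hA (hHmem i)) fun ω hω => ?_
        exact fun hωj => Set.disjoint_left.1 (hH.2.1 hji) hωj hω.2
      rw [hz, zero_mul]
  have hμ₁_H : ∀ i, μ₁ (H i) = π (H i) := by
    intro i
    have h1 := hμ₁_inter Set.univ h𝒜f.1 i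
    rw [Set.univ_inter] at h1
    have h2 : σ Set.univ i = 1 := (hσfap i).2.1
    rw [h1, h2, one_mul]
  have hμ₁_addOn : AddOn 𝒜 μ₁ := by
    constructor
    · intro A hA
      exact tsum_nonneg fun i => mul_nonneg (hσnn i A hA) (hπH_nonneg i)
    · intro A hA B hB hd
      rw [hμ₁]
      simp only
      have hfe : (fun i => σ (A ∪ B) i * π (H i)) =
          fun i => σ A i * π (H i) + σ B i * π (H i) := by
        funext i
        have hab : σ (A ∪ B) i = σ A i + σ B i := (hσfap i).2.2 A hA B hB hd
        rw [hab, add_mul]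
      rw [hfe]
      exact Summable.tsum_add (hsummable A hA) (hsummable B hB)
  have hμ₁_L_le : ∀ C ∈ 𝒜L, μ₁ C ≤ π C := by
    intro C hC
    refine Summable.tsum_le_of_sum_le (hsummable C (h𝒜Lsub hC)) fun u => ?_
    have h1 : ∀ i ∈ u, σ C i * π (H i) = π (C ∩ H i) := fun i _ => (hπ_inter_L C hC i).symm
    rw [Finset.sum_congr rfl h1]
    have hmemi : ∀ i ∈ u, C ∩ H i ∈ 𝒜L := fun i _ => h𝒜Lf.inter_mem' hC (hHmemL i)
    have hdisj : ∀ i ∈ u, ∀ j ∈ u, i ≠ j → Disjoint (C ∩ H i) (C ∩ H j) :=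
      fun i _ j _ hij => (hH.2.1 hij).mono Set.inter_subset_right Set.inter_subset_right
    rw [← hπadd.finsetSum h𝒜Lf u (fun i => C ∩ H i) hmemi hdisj]
    exact hπadd.mono' h𝒜Lf (h𝒜Lf.biUnion_mem' u _ hmemi) hC
      (Set.iUnion₂_subset fun i _ => Set.inter_subset_left)
  set π' : Set Ω → ℝ := fun B => π B - μ₁ B with hπ'def
  have hπ'addOn : AddOn 𝒜L π' := by
    constructor
    · intro B hB
      have := hμ₁_L_le B hB
      simp only [hπ'def]
      linarith
    · intro A hA B hB hd
      simp only [hπ'def]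
      rw [hπadd.2 A hA B hB hd, hμ₁_addOn.2 A (h𝒜Lsub hA) B (h𝒜Lsub hB) hd]
      ring
  obtain ⟨ρ, hρnn, hρadd, hρL, hρF⟩ := exists_rho h𝒜Lf π' hπ'addOn F
  have hρmono : ∀ A B : Set Ω, A ⊆ B → ρ A ≤ ρ B := by
    intro A B hAB
    have h1 := hρadd A (B \ A) disjoint_sdiff_right
    rw [Set.union_diff_cancel hAB] at h1
    linarith [hρnn (B \ A)]
  have hπ'H : ∀ i, π' (H i) = 0 := by
    intro i
    simp only [hπ'def]
    rw [hμ₁_H i]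
    ring
  set ν : Set Ω → ℝ := fun A => μ₁ A + ρ A with hνdef
  have hν_addOn : AddOn 𝒜 ν := by
    constructor
    · intro A hA
      exact add_nonneg (hμ₁_addOn.1 A hA) (hρnn A)
    · intro A hA B hB hd
      simp only [hνdef]
      rw [hμ₁_addOn.2 A hA B hB hd, hρadd A B hd]
      ring
  have hνL : ∀ B ∈ 𝒜L, ν B = π B := by
    intro B hB
    simp only [hνdef]
    rw [hρL B hB]
    simp only [hπ'def]
    ring
  have hν1 : ν Set.univ = 1 := by
    rw [hνL Set.univ h𝒜Lf.1, hπ.2.1]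
  have hνH : ∀ i, ∀ A ∈ 𝒜, ν (A ∩ H i) = σ A i * ν (H i) := by
    intro i A hA
    have h1 : ρ (A ∩ H i) = 0 := by
      refine le_antisymm ?_ (hρnn _)
      calc ρ (A ∩ H i) ≤ ρ (H i) := hρmono _ _ Set.inter_subset_right
        _ = π' (H i) := hρL _ (hHmemL i)
        _ = 0 := hπ'H i
    have h2 : ν (H i) = π (H i) := hνL _ (hHmemL i)
    simp only [hνdef] at h2 ⊢
    rw [hμ₁_inter A hA i, h1, add_zero, h2]
  obtain ⟨P₀, hP₀fcp, hP₀univ, hP₀H⟩ := layered_fcp h𝒜f hH hHmem hσ ν hν_addOn hν1 hνH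
  have hP₀mem : P₀ ∈ FCPSet 𝒜 𝒜L H π σ :=
    ⟨hP₀fcp, fun B hB => by rw [hP₀univ B (h𝒜Lsub hB), hνL B hB], hP₀H⟩
  set SS : Set ℝ := {x | ∃ (s : Finset ι) (T : Finset (Set Ω)),
      (↑T : Set (Set Ω)) ⊆ 𝒜L ∧
      (∀ B ∈ T, (B : Set Ω).Nonempty) ∧
      (∀ B ∈ T, ∀ B' ∈ T, B ≠ B' → Disjoint B B') ∧
      (∀ i ∈ s, ∀ B ∈ T, Disjoint (H i) B) ∧
      ((⋃ i ∈ s, H i) ∪ ⋃₀ (↑T : Set (Set Ω)) = Set.univ) ∧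
      x = (∑ i ∈ s, σ F i * π (H i)) + ∑ B ∈ T, if B ⊆ F then π B else 0} with hSS
  have hSS_ne : SS.Nonempty := by
    refine ⟨(∑ i ∈ (∅ : Finset ι), σ F i * π (H i)) +
      ∑ B ∈ ({Set.univ} : Finset (Set Ω)), if B ⊆ F then π B else 0,
      ∅, {Set.univ}, ?_, ?_, ?_, ?_, ?_, rfl⟩
    · intro B hB
      simp only [Finset.coe_singleton, Set.mem_singleton_iff] at hB
      rw [hB]
      exact h𝒜Lf.1
    · intro B hB
      simp only [Finset.mem_singleton] at hB
      rw [hB]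
      exact Set.univ_nonempty
    · intro B hB B' hB' hne
      simp only [Finset.mem_singleton] at hB hB'
      exact absurd (hB.trans hB'.symm) hne
    · intro i hi
      exact absurd hi (Finset.notMem_empty i)
    · simp
  have hSS_bdd : BddAbove SS := by
    refine ⟨1, ?_⟩
    rintro x ⟨s, T, hT𝒜L, hTne, hTdisj, hHT, hUnion, rfl⟩
    have hTmem : ∀ B ∈ T, B ∈ 𝒜L := fun B hB => hT𝒜L hB
    have h1 : ∀ i ∈ s, σ F i * π (H i) ≤ π (H i) := by
      intro i _
      calc σ F i * π (H i) ≤ 1 * π (H i) :=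
            mul_le_mul_of_nonneg_right (hσle1 i F hF) (hπH_nonneg i)
        _ = π (H i) := one_mul _
    have h2 : ∀ B ∈ T, (if B ⊆ F then π B else 0) ≤ π B := by
      intro B hB
      split
      · exact le_refl _
      · exact hπnn B (hTmem B hB)
    have h3 : ∑ i ∈ s, π (H i) = π (⋃ i ∈ s, H i) :=
      (hπadd.finsetSum h𝒜Lf s H (fun i _ => hHmemL i) (fun i _ j _ hij => hH.2.1 hij)).symm
    have hsu : ⋃₀ (↑T : Set (Set Ω)) = ⋃ B ∈ T, B := by
      ext ω
      simp
    have h4 : ∑ B ∈ T, π B = π (⋃₀ (↑T : Set (Set Ω))) := by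
      rw [hsu]
      exact (hπadd.finsetSum h𝒜Lf T id (fun B hB => hTmem B hB)
        (fun B hB B' hB' hne => hTdisj B hB B' hB' hne)).symm
    have hUmem : (⋃ i ∈ s, H i) ∈ 𝒜L := h𝒜Lf.biUnion_mem' s H fun i _ => hHmemL i
    have hTUmem : ⋃₀ (↑T : Set (Set Ω)) ∈ 𝒜L := by
      rw [hsu]
      exact h𝒜Lf.biUnion_mem' T id fun B hB => hTmem B hB
    have hdisjU : Disjoint (⋃ i ∈ s, H i) (⋃₀ (↑T : Set (Set Ω))) := by
      rw [hsu]
      refine Set.disjoint_iUnion₂_left.2 fun i hi => ?_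
      exact Set.disjoint_iUnion₂_right.2 fun B hB => hHT i hi B hB
    have h5 : π (⋃ i ∈ s, H i) + π (⋃₀ (↑T : Set (Set Ω))) = 1 := by
      rw [← hπadd.2 _ hUmem _ hTUmem hdisjU, hUnion, hπ.2.1]
    calc (∑ i ∈ s, σ F i * π (H i)) + ∑ B ∈ T, (if B ⊆ F then π B else 0)
        ≤ (∑ i ∈ s, π (H i)) + ∑ B ∈ T, π B :=
          add_le_add (Finset.sum_le_sum h1) (Finset.sum_le_sum h2)
      _ = 1 := by rw [h3, h4, h5]
  -- every element of SS is a lower bound for values of members of the FCP set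
  have hdir1 : ∀ P ∈ FCPSet 𝒜 𝒜L H π σ, ∀ x ∈ SS, x ≤ P F Set.univ := by
    rintro P ⟨hPfcp, hPprior, hPσ⟩ x ⟨s, T, hT𝒜L, hTne, hTdisj, hHT, hUnion, rfl⟩
    have hPadd : AddOn 𝒜 (fun A => P A Set.univ) :=
      (hPfcp.2.1 Set.univ h𝒜f.1 Set.univ_nonempty).addOn
    have hkey : ∀ i, P (F ∩ H i) Set.univ = σ F i * π (H i) := by
      intro i
      have hc3 := hPfcp.2.2 (H i) (hHmem i) F hF Set.univ h𝒜f.1 Set.univ_nonempty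
        (by rw [Set.inter_univ]; exact hHne i)
      rw [Set.inter_univ] at hc3
      rw [Set.inter_comm F (H i), hc3, hPprior (H i) (hHmemL i), hPσ F hF i]
      ring
    set T' := T.filter (fun B => B ⊆ F) with hT'
    have hT'sub : ∀ B ∈ T', B ∈ T := fun B hB => (Finset.mem_filter.1 hB).1
    have hT'F : ∀ B ∈ T', B ⊆ F := fun B hB => (Finset.mem_filter.1 hB).2
    have hxeq : ∑ B ∈ T, (if B ⊆ F then π B else 0) = ∑ B ∈ T', π B :=
      (Finset.sum_filter _ _).symm
    have hmem1 : ∀ i ∈ s, F ∩ H i ∈ 𝒜 := fun i _ => h𝒜f.inter_mem' hF (hHmem i)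
    have hmem2 : ∀ B ∈ T', B ∈ 𝒜 := fun B hB => h𝒜Lsub (hT𝒜L (hT'sub B hB))
    have hU1mem : (⋃ i ∈ s, F ∩ H i) ∈ 𝒜 := h𝒜f.biUnion_mem' s _ hmem1
    have hU2mem : (⋃ B ∈ T', B) ∈ 𝒜 := h𝒜f.biUnion_mem' T' id hmem2
    have hs1 : P (⋃ i ∈ s, F ∩ H i) Set.univ = ∑ i ∈ s, P (F ∩ H i) Set.univ :=
      hPadd.finsetSum h𝒜f s _ hmem1
        (fun i _ j _ hij => (hH.2.1 hij).mono Set.inter_subset_right Set.inter_subset_right)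
    have hs2 : P (⋃ B ∈ T', B) Set.univ = ∑ B ∈ T', P B Set.univ :=
      hPadd.finsetSum h𝒜f T' id hmem2
        (fun B hB B' hB' hne => hTdisj B (hT'sub B hB) B' (hT'sub B' hB') hne)
    have hdisjU : Disjoint (⋃ i ∈ s, F ∩ H i) (⋃ B ∈ T', B) := by
      refine Set.disjoint_iUnion₂_left.2 fun i hi => ?_
      refine Set.disjoint_iUnion₂_right.2 fun B hB => ?_
      exact (hHT i hi B (hT'sub B hB)).mono_left Set.inter_subset_right
    have hsum : P ((⋃ i ∈ s, F ∩ H i) ∪ ⋃ B ∈ T', B) Set.univ =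
        (∑ i ∈ s, P (F ∩ H i) Set.univ) + ∑ B ∈ T', P B Set.univ := by
      have hadd2 : P ((⋃ i ∈ s, F ∩ H i) ∪ ⋃ B ∈ T', B) Set.univ =
          P (⋃ i ∈ s, F ∩ H i) Set.univ + P (⋃ B ∈ T', B) Set.univ :=
        hPadd.2 _ hU1mem _ hU2mem hdisjU
      rw [hadd2, hs1, hs2]
    have hle : P ((⋃ i ∈ s, F ∩ H i) ∪ ⋃ B ∈ T', B) Set.univ ≤ P F Set.univ := by
      refine hPadd.mono' h𝒜f (h𝒜f.2.2 _ hU1mem _ hU2mem) hF ?_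
      refine Set.union_subset ?_ ?_
      · exact Set.iUnion₂_subset fun i _ => Set.inter_subset_left
      · exact Set.iUnion₂_subset fun B hB => hT'F B hB
    have hval1 : ∑ i ∈ s, P (F ∩ H i) Set.univ = ∑ i ∈ s, σ F i * π (H i) :=
      Finset.sum_congr rfl fun i _ => hkey i
    have hval2 : ∑ B ∈ T', P B Set.univ = ∑ B ∈ T', π B :=
      Finset.sum_congr rfl fun B hB => hPprior B (hT𝒜L (hT'sub B hB))
    calc (∑ i ∈ s, σ F i * π (H i)) + ∑ B ∈ T, (if B ⊆ F then π B else 0)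
        = (∑ i ∈ s, P (F ∩ H i) Set.univ) + ∑ B ∈ T', P B Set.univ := by
          rw [hxeq, hval1, hval2]
      _ = P ((⋃ i ∈ s, F ∩ H i) ∪ ⋃ B ∈ T', B) Set.univ := hsum.symm
      _ ≤ P F Set.univ := hle
  -- the core inequality
  have hcore : ∀ (s : Finset ι), ∀ C ∈ 𝒜L, C ⊆ F →
      (∑ i ∈ s, σ F i * π (H i)) + π' C ≤ sSup SS := by
    intro s C hC hCF
    set U : Set Ω := ⋃ i ∈ s, H i with hU
    have hUmem : U ∈ 𝒜L := h𝒜Lf.biUnion_mem' s H fun i _ => hHmemL i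
    set B' : Set Ω := C \ U with hB'
    have hB'mem : B' ∈ 𝒜L := h𝒜Lf.diff_mem' hC hUmem
    set R : Set Ω := (U ∪ B')ᶜ with hR
    have hRmem : R ∈ 𝒜L := h𝒜Lf.2.1 _ (h𝒜Lf.2.2 _ hUmem _ hB'mem)
    set T : Finset (Set Ω) := ({B', R} : Finset (Set Ω)).filter (fun X => X.Nonempty) with hT
    have hTmem : ∀ B ∈ T, B ∈ 𝒜L := by
      intro B hB
      rcases Finset.mem_insert.1 (Finset.mem_filter.1 hB).1 with h | h
      · rw [h]; exact hB'mem
      · rw [Finset.mem_singleton.1 h]; exact hRmem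
    have hdisjBR : Disjoint B' R := by
      rw [hR]
      exact (disjoint_compl_right).mono_left Set.subset_union_right
    have hHU : ∀ i ∈ s, H i ⊆ U := fun i hi => Set.subset_biUnion_of_mem hi
    have hmemSS : (∑ i ∈ s, σ F i * π (H i)) +
        (∑ B ∈ T, if B ⊆ F then π B else 0) ∈ SS := by
      refine ⟨s, T, ?_, ?_, ?_, ?_, ?_, rfl⟩
      · intro B hB
        exact hTmem B hB
      · intro B hB
        exact (Finset.mem_filter.1 hB).2
      · intro B hB B'' hB'' hne
        rcases Finset.mem_insert.1 (Finset.mem_filter.1 hB).1 with h | h <;>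
          rcases Finset.mem_insert.1 (Finset.mem_filter.1 hB'').1 with h' | h'
        · exact absurd (h.trans h'.symm) hne
        · rw [h, Finset.mem_singleton.1 h']
          exact hdisjBR
        · rw [Finset.mem_singleton.1 h, h']
          exact hdisjBR.symm
        · exact absurd ((Finset.mem_singleton.1 h).trans
            (Finset.mem_singleton.1 h').symm) hne
      · intro i hi B hB
        rcases Finset.mem_insert.1 (Finset.mem_filter.1 hB).1 with h | h
        · rw [h, hB']
          exact (Set.disjoint_sdiff_right (s := U) (t := C)).mono_left (hHU i hi)
        · rw [Finset.mem_singleton.1 h, hR]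
          exact (disjoint_compl_right).mono_left
            ((hHU i hi).trans Set.subset_union_left)
      · rw [← hU]
        refine Set.eq_univ_of_forall fun ω => ?_
        by_cases hωU : ω ∈ U
        · exact Or.inl hωU
        · by_cases hωB : ω ∈ B'
          · refine Or.inr ⟨B', ?_, hωB⟩
            exact Finset.mem_coe.2 (Finset.mem_filter.2
              ⟨Finset.mem_insert_self _ _, ⟨ω, hωB⟩⟩)
          · have hωR : ω ∈ R := by
              rw [hR]
              intro hc
              rcases hc with h | h
              · exact hωU h
              · exact hωB h
            refine Or.inr ⟨R, ?_, hωR⟩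
            exact Finset.mem_coe.2 (Finset.mem_filter.2
              ⟨Finset.mem_insert_of_mem (Finset.mem_singleton_self _), ⟨ω, hωR⟩⟩)
    have hle1 : (∑ i ∈ s, σ F i * π (H i)) +
        (∑ B ∈ T, if B ⊆ F then π B else 0) ≤ sSup SS := le_csSup hSS_bdd hmemSS
    -- π' C ≤ π B'
    have hπ'C : π' C ≤ π B' := by
      have hdecomp : C = B' ∪ ⋃ i ∈ s, (C ∩ H i) := by
        ext ω
        constructor
        · intro hω
          by_cases hωU : ω ∈ U
          · obtain ⟨i, hi, hωi⟩ := Set.mem_iUnion₂.1 hωU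
            exact Or.inr (Set.mem_iUnion₂.2 ⟨i, hi, hω, hωi⟩)
          · exact Or.inl ⟨hω, hωU⟩
        · rintro (h | h)
          · exact h.1
          · obtain ⟨i, hi, hωi⟩ := Set.mem_iUnion₂.1 h
            exact hωi.1
      have hmemi : ∀ i ∈ s, C ∩ H i ∈ 𝒜L := fun i _ => h𝒜Lf.inter_mem' hC (hHmemL i)
      have hUi : (⋃ i ∈ s, C ∩ H i) ∈ 𝒜L := h𝒜Lf.biUnion_mem' s _ hmemi
      have hdisj : Disjoint B' (⋃ i ∈ s, C ∩ H i) := by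
        refine Set.disjoint_iUnion₂_right.2 fun i hi => ?_
        refine ((Set.disjoint_sdiff_right (s := U) (t := C)).symm).mono_right ?_
        exact (Set.inter_subset_right).trans (hHU i hi)
      have h1 : π C = π B' + ∑ i ∈ s, π (C ∩ H i) := by
        calc π C = π (B' ∪ ⋃ i ∈ s, C ∩ H i) := by rw [← hdecomp]
          _ = π B' + π (⋃ i ∈ s, C ∩ H i) := hπadd.2 _ hB'mem _ hUi hdisj
          _ = π B' + ∑ i ∈ s, π (C ∩ H i) := by
              rw [hπadd.finsetSum h𝒜Lf s _ hmemi (fun i _ j _ hij =>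
                (hH.2.1 hij).mono Set.inter_subset_right Set.inter_subset_right)]
      have h2 : ∑ i ∈ s, π (C ∩ H i) = ∑ i ∈ s, σ C i * π (H i) :=
        Finset.sum_congr rfl fun i _ => hπ_inter_L C hC i
      have h3 : ∑ i ∈ s, σ C i * π (H i) ≤ μ₁ C :=
        Summable.sum_le_tsum s (fun i _ => mul_nonneg (hσnn i C (h𝒜Lsub hC)) (hπH_nonneg i))
          (hsummable C (h𝒜Lsub hC))
      simp only [hπ'def]
      linarith [h1, h2 ▸ h3]
    have hB'F : B' ⊆ F := (Set.diff_subset).trans hCF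
    have hsumT : π B' ≤ ∑ B ∈ T, (if B ⊆ F then π B else 0) := by
      rcases Set.eq_empty_or_nonempty B' with hBe | hBne
      · rw [hBe, hπadd.empty' h𝒜Lf]
        refine Finset.sum_nonneg fun B hB => ?_
        split
        · exact hπnn B (hTmem B hB)
        · exact le_refl 0
      · have hBT : B' ∈ T := Finset.mem_filter.2 ⟨Finset.mem_insert_self _ _, hBne⟩
        calc π B' = (if B' ⊆ F then π B' else 0) := by rw [if_pos hB'F]
          _ ≤ ∑ B ∈ T, (if B ⊆ F then π B else 0) := by
              refine Finset.single_le_sum (f := fun B => if B ⊆ F then π B else 0)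
                (fun B hB => ?_) hBT
              show 0 ≤ if B ⊆ F then π B else 0
              split
              · exact hπnn B (hTmem B hB)
              · exact le_refl 0
    calc (∑ i ∈ s, σ F i * π (H i)) + π' C
        ≤ (∑ i ∈ s, σ F i * π (H i)) + ∑ B ∈ T, (if B ⊆ F then π B else 0) := by
          linarith [hπ'C, hsumT]
      _ ≤ sSup SS := hle1
  have hval : P₀ F Set.univ ≤ sSup SS := by
    rw [hP₀univ F hF]
    have hρF_le : ρ F ≤ sSup SS - μ₁ F := by
      rw [hρF]
      refine csSup_le ⟨π' ∅, ∅, h𝒜Lf.empty_mem', Set.empty_subset F, rfl⟩ ?_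
      rintro x ⟨C, hC, hCF, rfl⟩
      have h1 : μ₁ F ≤ sSup SS - π' C := by
        refine Summable.tsum_le_of_sum_le (hsummable F hF) fun u => ?_
        linarith [hcore u C hC hCF]
      linarith
    simp only [hνdef]
    linarith
  -- conclusion
  show sInf ((fun P => P F Set.univ) '' FCPSet 𝒜 𝒜L H π σ) = sSup SS
  have himg_ne : ((fun P => P F Set.univ) '' FCPSet 𝒜 𝒜L H π σ).Nonempty :=
    ⟨_, ⟨P₀, hP₀mem, rfl⟩⟩
  apply le_antisymm
  · have hbddb : BddBelow ((fun P => P F Set.univ) '' FCPSet 𝒜 𝒜L H π σ) := by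
      refine ⟨0, ?_⟩
      rintro y ⟨P, hP, rfl⟩
      exact ((hP.1.2.1 Set.univ h𝒜f.1 Set.univ_nonempty).1 F hF).1
    calc sInf ((fun P => P F Set.univ) '' FCPSet 𝒜 𝒜L H π σ)
        ≤ P₀ F Set.univ := csInf_le hbddb ⟨P₀, hP₀mem, rfl⟩
      _ ≤ sSup SS := hval
  · refine csSup_le hSS_ne fun x hx => ?_
    refine le_csInf himg_ne ?_
    rintro y ⟨P, hP, rfl⟩
    exact hdir1 P hP x hx
end

section
/- Let F ∈ 𝒜 and K ∈ 𝒜⁰ with F ∩ K ≠ K and P^j_*(K) > 0. Then P_*(F|K) = min{ P^j_*(F∩K) / (P^j_*(F∩K) + U^j(F^c,K)) , L^j(F,K) / (L^j(F,K) + P^{j*}(F^c∩K)) }. -/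
open Set

open scoped Classical

variable {Ω : Type*}

/-- `L^j(F,K)`: minimum of `μ(F ∩ K)` over joint probabilities in `𝒫^j` attaining the
upper envelope at `F^c ∩ K`. -/
noncomputable def Lj {Ω : Type*} (Ps : Set (Set Ω → Set Ω → ℝ)) (F K : Set Ω) : ℝ :=
  sInf {x | ∃ P ∈ Ps, P (Fᶜ ∩ K) Set.univ = upEnv Ps (Fᶜ ∩ K) Set.univ ∧
    x = P (F ∩ K) Set.univ}

/-- `U^j(F,K)`: maximum of `μ(F ∩ K)` over joint probabilities in `𝒫^j` attaining the
lower envelope at `F^c ∩ K`. -/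
noncomputable def Uj {Ω : Type*} (Ps : Set (Set Ω → Set Ω → ℝ)) (F K : Set Ω) : ℝ :=
  sSup {x | ∃ P ∈ Ps, P (Fᶜ ∩ K) Set.univ = lowEnv Ps (Fᶜ ∩ K) Set.univ ∧
    x = P (F ∩ K) Set.univ}


section Statement3Aux

open Filter Topology

set_option linter.unusedSectionVars false
set_option linter.unusedVariables false

namespace St3

variable {Ω ι : Type*}

lemma sf_empty {𝒜 : Set (Set Ω)} (h : IsSetField 𝒜) : (∅ : Set Ω) ∈ 𝒜 := by
  simpa using h.2.1 _ h.1

lemma sf_inter {𝒜 : Set (Set Ω)} (h : IsSetField 𝒜) {A B : Set Ω} (hA : A ∈ 𝒜) (hB : B ∈ 𝒜) :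
    A ∩ B ∈ 𝒜 := by
  have := h.2.1 _ (h.2.2 _ (h.2.1 _ hA) _ (h.2.1 _ hB))
  simpa [Set.compl_union] using this

lemma sf_diff {𝒜 : Set (Set Ω)} (h : IsSetField 𝒜) {A B : Set Ω} (hA : A ∈ 𝒜) (hB : B ∈ 𝒜) :
    A \ B ∈ 𝒜 := by
  rw [Set.diff_eq]; exact sf_inter h hA (h.2.1 _ hB)

variable {𝒜 : Set (Set Ω)} {P : Set Ω → ℝ}

lemma fap_nonneg (hP : IsFAP 𝒜 P) {A : Set Ω} (hA : A ∈ 𝒜) : 0 ≤ P A := (hP.1 A hA).1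

lemma fap_le_one (hP : IsFAP 𝒜 P) {A : Set Ω} (hA : A ∈ 𝒜) : P A ≤ 1 := (hP.1 A hA).2

lemma fap_empty (h𝒜 : IsSetField 𝒜) (hP : IsFAP 𝒜 P) : P ∅ = 0 := by
  have := hP.2.2 ∅ (sf_empty h𝒜) ∅ (sf_empty h𝒜) (by simp)
  simp at this
  linarith

lemma fap_inter_add (h𝒜 : IsSetField 𝒜) (hP : IsFAP 𝒜 P) {A G : Set Ω}
    (hA : A ∈ 𝒜) (hG : G ∈ 𝒜) : P A = P (A ∩ G) + P (A \ G) := by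
  have hd : Disjoint (A ∩ G) (A \ G) := Set.disjoint_left.mpr fun x hx hx' => hx'.2 hx.2
  have := hP.2.2 _ (sf_inter h𝒜 hA hG) _ (sf_diff h𝒜 hA hG) hd
  rwa [Set.inter_union_diff] at this

lemma fap_mono (h𝒜 : IsSetField 𝒜) (hP : IsFAP 𝒜 P) {A B : Set Ω}
    (hA : A ∈ 𝒜) (hB : B ∈ 𝒜) (hAB : A ⊆ B) : P A ≤ P B := by
  have h := fap_inter_add h𝒜 hP hB hA
  rw [Set.inter_eq_right.mpr hAB] at h
  have := fap_nonneg hP (sf_diff h𝒜 hB hA)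
  linarith

lemma fap_biUnion {γ : Type*} (h𝒜 : IsSetField 𝒜) (hP : IsFAP 𝒜 P) (T : Finset γ)
    (g : γ → Set Ω) (hg : ∀ c ∈ T, g c ∈ 𝒜)
    (hd : ∀ c ∈ T, ∀ c' ∈ T, c ≠ c' → Disjoint (g c) (g c')) :
    (⋃ c ∈ T, g c) ∈ 𝒜 ∧ P (⋃ c ∈ T, g c) = ∑ c ∈ T, P (g c) := by
  classical
  revert hg hd
  induction T using Finset.induction_on with
  | empty => intro hg hd; simp [sf_empty h𝒜, fap_empty h𝒜 hP]
  | @insert a T ha ih =>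
    intro hg hd
    obtain ⟨hmem, hsum⟩ := ih (fun c hc => hg c (Finset.mem_insert_of_mem hc))
      (fun c hc c' hc' hne => hd c (Finset.mem_insert_of_mem hc) c' (Finset.mem_insert_of_mem hc') hne)
    have hga : g a ∈ 𝒜 := hg a (Finset.mem_insert_self a T)
    have hdisj : Disjoint (g a) (⋃ c ∈ T, g c) := by
      simp only [Set.disjoint_iUnion_right]
      exact fun c hc => hd a (Finset.mem_insert_self a T) c (Finset.mem_insert_of_mem hc)
        (fun h => ha (h ▸ hc))
    constructor
    · rw [Finset.set_biUnion_insert]; exact h𝒜.2.2 _ hga _ hmem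
    · rw [Finset.set_biUnion_insert, hP.2.2 _ hga _ hmem hdisj, hsum, Finset.sum_insert ha]

variable {H : ι → Set Ω} {σ : Set Ω → ι → ℝ}

lemma strat_zero (h𝒜 : IsSetField 𝒜) (hσ : IsStrategy 𝒜 H σ) (hmemH : ∀ i, H i ∈ 𝒜)
    {G : Set Ω} (hG : G ∈ 𝒜) {i : ι} (h : G ∩ H i = ∅) : σ G i = 0 := by
  have hfap : IsFAP 𝒜 (fun F => σ F i) := (hσ i).1
  have h1 : σ ((H i)ᶜ ∪ H i) i = σ (H i)ᶜ i + σ (H i) i :=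
    hfap.2.2 _ (h𝒜.2.1 _ (hmemH i)) _ (hmemH i) disjoint_compl_left
  rw [Set.compl_union_self] at h1
  have h2 : σ (H i) i = 1 := (hσ i).2 _ (hmemH i) subset_rfl
  have huniv : σ Set.univ i = 1 := hfap.2.1
  have h3 : σ (H i)ᶜ i = 0 := by linarith
  have hsub : G ⊆ (H i)ᶜ := by
    intro x hx hxi
    exact absurd (Set.mem_inter hx hxi) (by simp [h])
  have hm := fap_mono h𝒜 hfap hG (h𝒜.2.1 _ (hmemH i)) hsub
  have hn := fap_nonneg hfap hG
  linarith

lemma strat_inter_self (h𝒜 : IsSetField 𝒜) (hσ : IsStrategy 𝒜 H σ) (hmemH : ∀ i, H i ∈ 𝒜)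
    {G : Set Ω} (hG : G ∈ 𝒜) (i : ι) : σ (G ∩ H i) i = σ G i := by
  have hfap : IsFAP 𝒜 (fun F => σ F i) := (hσ i).1
  have h := fap_inter_add h𝒜 hfap hG (hmemH i)
  have h0 : σ (G \ H i) i = 0 :=
    strat_zero h𝒜 hσ hmemH (sf_diff h𝒜 hG (hmemH i)) (Set.diff_inter_self)
  linarith

lemma part_dichot {𝒜L : Set (Set Ω)} (hH : IsPartition H) (hFO : IsFieldOver H 𝒜L)
    {B : Set Ω} (hB : B ∈ 𝒜L) (i : ι) : H i ∩ B = ∅ ∨ H i ⊆ B := by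
  obtain ⟨S, rfl⟩ := hFO.2.2 B hB
  by_cases hc : H i ∩ ⋃ j ∈ S, H j = ∅
  · exact Or.inl hc
  · right
    obtain ⟨x, hx⟩ := Set.nonempty_iff_ne_empty.mpr hc
    obtain ⟨hxi, hxU⟩ := hx
    simp only [Set.mem_iUnion] at hxU
    obtain ⟨j, hjS, hxj⟩ := hxU
    have hij : i = j := by
      by_contra hne
      exact (hH.2.1 hne).le_bot ⟨hxi, hxj⟩ |>.elim
    subst hij
    exact Set.subset_biUnion_of_mem hjS

variable {𝒜L : Set (Set Ω)} {π : Set Ω → ℝ}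

structure Stg (H : ι → Set Ω) (𝒜L : Set (Set Ω)) where
  T : Finset (Set Ω)
  J : Finset ι
  hsub : ↑T ⊆ 𝒜L
  hdisj : ∀ A ∈ T, ∀ B ∈ T, A ≠ B → Disjoint A B
  hcov : ⋃₀ (↑T : Set (Set Ω)) = Set.univ

instance stgPre (H : ι → Set Ω) (𝒜L : Set (Set Ω)) : Preorder (Stg H 𝒜L) where
  le s t := s.J ⊆ t.J ∧ ∀ B ∈ t.T, ∃ A ∈ s.T, B ⊆ A
  le_refl s := ⟨subset_rfl, fun B hB => ⟨B, hB, subset_rfl⟩⟩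
  le_trans s t u hst htu := ⟨hst.1.trans htu.1, fun B hB => by
    obtain ⟨A, hA, hBA⟩ := htu.2 B hB
    obtain ⟨A', hA', hAA'⟩ := hst.2 A hA
    exact ⟨A', hA', hBA.trans hAA'⟩⟩

lemma stg_le_def {H : ι → Set Ω} {𝒜L : Set (Set Ω)} {s t : Stg H 𝒜L} :
    s ≤ t ↔ s.J ⊆ t.J ∧ ∀ B ∈ t.T, ∃ A ∈ s.T, B ⊆ A := Iff.rfl

lemma stg_nonempty {H : ι → Set Ω} (hL : IsSetField 𝒜L) : Nonempty (Stg H 𝒜L) :=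
  ⟨⟨{Set.univ}, ∅, by simp [hL.1], by simp, by simp⟩⟩

lemma stg_directed {H : ι → Set Ω} (hL : IsSetField 𝒜L) :
    IsDirected (Stg H 𝒜L) (· ≤ ·) := by
  constructor
  intro s t
  classical
  refine ⟨⟨(s.T ×ˢ t.T).image (fun p => p.1 ∩ p.2), s.J ∪ t.J, ?_, ?_, ?_⟩, ?_, ?_⟩
  · intro A hA
    simp only [Finset.coe_image, Set.mem_image, Finset.mem_coe, Finset.mem_product] at hA
    obtain ⟨⟨A₁, A₂⟩, ⟨h1, h2⟩, rfl⟩ := hA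
    exact sf_inter hL (s.hsub h1) (t.hsub h2)
  · intro A hA B hB hne
    simp only [Finset.mem_image, Finset.mem_product] at hA hB
    obtain ⟨⟨A₁, A₂⟩, ⟨hA1, hA2⟩, rfl⟩ := hA
    obtain ⟨⟨B₁, B₂⟩, ⟨hB1, hB2⟩, rfl⟩ := hB
    by_cases h1 : A₁ = B₁
    · by_cases h2 : A₂ = B₂
      · exact absurd (by rw [h1, h2]) hne
      · exact Set.disjoint_of_subset Set.inter_subset_right Set.inter_subset_right
          (t.hdisj A₂ hA2 B₂ hB2 h2)
    · exact Set.disjoint_of_subset Set.inter_subset_left Set.inter_subset_left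
        (s.hdisj A₁ hA1 B₁ hB1 h1)
  · ext x
    simp only [Set.mem_sUnion, Finset.mem_coe, Finset.mem_image, Finset.mem_product,
      Set.mem_univ, iff_true]
    have hx1 : x ∈ ⋃₀ (↑s.T : Set (Set Ω)) := by rw [s.hcov]; trivial
    have hx2 : x ∈ ⋃₀ (↑t.T : Set (Set Ω)) := by rw [t.hcov]; trivial
    obtain ⟨A₁, hA1, hxA1⟩ := hx1
    obtain ⟨A₂, hA2, hxA2⟩ := hx2
    exact ⟨A₁ ∩ A₂, ⟨⟨A₁, A₂⟩, ⟨hA1, hA2⟩, rfl⟩, hxA1, hxA2⟩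
  · refine ⟨Finset.subset_union_left, fun B hB => ?_⟩
    simp only [Finset.mem_image, Finset.mem_product] at hB
    obtain ⟨⟨A₁, A₂⟩, ⟨h1, h2⟩, rfl⟩ := hB
    exact ⟨A₁, h1, Set.inter_subset_left⟩
  · refine ⟨Finset.subset_union_right, fun B hB => ?_⟩
    simp only [Finset.mem_image, Finset.mem_product] at hB
    obtain ⟨⟨A₁, A₂⟩, ⟨h1, h2⟩, rfl⟩ := hB
    exact ⟨A₂, h2, Set.inter_subset_right⟩

def HJ (H : ι → Set Ω) {𝒜L : Set (Set Ω)} (s : Stg H 𝒜L) : Set Ω := ⋃ i ∈ s.J, H i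

noncomputable def pick [Nonempty Ω] (H : ι → Set Ω) (F K : Set Ω) {𝒜L : Set (Set Ω)}
    (s : Stg H 𝒜L) (B : Set Ω) : Ω :=
  if h1 : ((B \ HJ H s) ∩ (Fᶜ ∩ K)).Nonempty then h1.some
  else if h2 : ((B \ HJ H s) ∩ (F ∩ K)ᶜ).Nonempty then h2.some
  else if h3 : (B \ HJ H s).Nonempty then h3.some
  else Classical.arbitrary Ω

noncomputable def nus [Nonempty Ω] (H : ι → Set Ω) (π : Set Ω → ℝ) (σ : Set Ω → ι → ℝ)
    (F K : Set Ω) {𝒜L : Set (Set Ω)} (s : Stg H 𝒜L) (G : Set Ω) : ℝ :=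
  (∑ i ∈ s.J, π (H i) * σ G i) +
    ∑ B ∈ s.T, π (B \ HJ H s) * Set.indicator G (fun _ => (1 : ℝ)) (pick H F K s B)


noncomputable def nulim [Nonempty Ω] (H : ι → Set Ω) (π : Set Ω → ℝ) (σ : Set Ω → ι → ℝ)
    (F K : Set Ω) {𝒜L : Set (Set Ω)} (𝓤 : Ultrafilter (Stg H 𝒜L)) (G : Set Ω) : ℝ :=
  limUnder (↑𝓤 : Filter (Stg H 𝒜L)) (fun s => nus H π σ F K s G)

section StageLemmas

variable [Nonempty Ω] {H : ι → Set Ω} {𝒜 : Set (Set Ω)} {σ : Set Ω → ι → ℝ} {F K : Set Ω}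

lemma pick_mem {s : Stg H 𝒜L} {B : Set Ω} (h : (B \ HJ H s).Nonempty) :
    pick H F K s B ∈ B \ HJ H s := by
  by_cases h1 : ((B \ HJ H s) ∩ (Fᶜ ∩ K)).Nonempty
  · unfold pick; rw [dif_pos h1]; exact h1.some_mem.1
  · by_cases h2 : ((B \ HJ H s) ∩ (F ∩ K)ᶜ).Nonempty
    · unfold pick; rw [dif_neg h1, dif_pos h2]; exact h2.some_mem.1
    · unfold pick; rw [dif_neg h1, dif_neg h2, dif_pos h]; exact h.some_mem

lemma pick_FcK {s : Stg H 𝒜L} {B : Set Ω}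
    (h : ((B \ HJ H s) ∩ (Fᶜ ∩ K)).Nonempty) : pick H F K s B ∈ Fᶜ ∩ K := by
  unfold pick
  rw [dif_pos h]
  exact h.some_mem.2

lemma pick_FK {s : Stg H 𝒜L} {B : Set Ω}
    (h : pick H F K s B ∈ F ∩ K) : B \ HJ H s ⊆ F ∩ K := by
  intro x hx
  by_contra hxF
  have h2 : ((B \ HJ H s) ∩ (F ∩ K)ᶜ).Nonempty := ⟨x, hx, hxF⟩
  by_cases h1 : ((B \ HJ H s) ∩ (Fᶜ ∩ K)).Nonempty
  · unfold pick at h; rw [dif_pos h1] at h; exact h1.some_mem.2.1 h.1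
  · unfold pick at h; rw [dif_neg h1, dif_pos h2] at h; exact h2.some_mem.2 h

variable (hH : IsPartition H) (hFO : IsFieldOver H 𝒜L) (hπ : IsFAP 𝒜L π)
  (h𝒜 : IsSetField 𝒜) (hLsub : 𝒜L ⊆ 𝒜) (hσ : IsStrategy 𝒜 H σ)

section
include hH hFO hπ

lemma HJ_mem (s : Stg H 𝒜L) : HJ H s ∈ 𝒜L ∧ π (HJ H s) = ∑ i ∈ s.J, π (H i) :=
  fap_biUnion hFO.1 hπ s.J H (fun i _ => hFO.2.1 i)
    (fun i _ j _ hne => hH.2.1 hne)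

lemma pi_decomp {B : Set Ω} (hB : B ∈ 𝒜L) (s : Stg H 𝒜L) :
    π B = (∑ i ∈ s.J, π (B ∩ H i)) + π (B \ HJ H s) := by
  have h1 := fap_inter_add hFO.1 hπ hB (HJ_mem hH hFO hπ s).1
  have h2 : B ∩ HJ H s = ⋃ i ∈ s.J, B ∩ H i := by
    unfold HJ
    rw [Set.inter_iUnion₂]
  have h3 := fap_biUnion hFO.1 hπ s.J (fun i => B ∩ H i)
    (fun i _ => sf_inter hFO.1 hB (hFO.2.1 i))
    (fun i _ j _ hne => Set.disjoint_of_subset Set.inter_subset_right Set.inter_subset_right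
      (hH.2.1 hne))
  rw [h2, h3.2] at h1
  exact h1

lemma pi_cell_of_subset {B : Set Ω} {i : ι} (h : H i ⊆ B) : π (B ∩ H i) = π (H i) := by
  rw [Set.inter_eq_right.mpr h]

lemma pi_cell_of_disj {B : Set Ω} {i : ι} (h : H i ∩ B = ∅) : π (B ∩ H i) = 0 := by
  rw [Set.inter_comm, h]
  exact fap_empty hFO.1 hπ

end

section
include hH hFO hπ h𝒜 hLsub hσ

lemma nus_nonneg {G : Set Ω} (hG : G ∈ 𝒜) (s : Stg H 𝒜L) : 0 ≤ nus H π σ F K s G := by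
  have h1 : ∀ i ∈ s.J, 0 ≤ π (H i) * σ G i := fun i _ =>
    mul_nonneg (fap_nonneg hπ (hFO.2.1 i)) (fap_nonneg (hσ i).1 hG)
  have h2 : ∀ B ∈ s.T, 0 ≤ π (B \ HJ H s) * Set.indicator G (fun _ => (1 : ℝ)) (pick H F K s B) :=
    fun B hB => mul_nonneg
      (fap_nonneg hπ (sf_diff hFO.1 (s.hsub hB) (HJ_mem hH hFO hπ s).1))
      (Set.indicator_nonneg (fun _ _ => by norm_num) _)
  exact add_nonneg (Finset.sum_nonneg h1) (Finset.sum_nonneg h2)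

lemma nus_add {A B : Set Ω} (hA : A ∈ 𝒜) (hB : B ∈ 𝒜) (hd : Disjoint A B) (s : Stg H 𝒜L) :
    nus H π σ F K s (A ∪ B) = nus H π σ F K s A + nus H π σ F K s B := by
  have h1 : ∀ i ∈ s.J, π (H i) * σ (A ∪ B) i = π (H i) * σ A i + π (H i) * σ B i := by
    intro i _
    have hadd : σ (A ∪ B) i = σ A i + σ B i := (hσ i).1.2.2 A hA B hB hd
    rw [hadd]; ring
  have h2 : ∀ C ∈ s.T, π (C \ HJ H s) * Set.indicator (A ∪ B) (fun _ => (1 : ℝ)) (pick H F K s C)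
      = π (C \ HJ H s) * Set.indicator A (fun _ => (1 : ℝ)) (pick H F K s C)
        + π (C \ HJ H s) * Set.indicator B (fun _ => (1 : ℝ)) (pick H F K s C) := by
    intro C _
    by_cases hpA : pick H F K s C ∈ A <;> by_cases hpB : pick H F K s C ∈ B
    · exact (Set.disjoint_left.mp hd hpA hpB).elim
    · rw [Set.indicator_of_mem (Set.mem_union_left _ hpA), Set.indicator_of_mem hpA,
        Set.indicator_of_notMem hpB]; ring
    · rw [Set.indicator_of_mem (Set.mem_union_right _ hpB), Set.indicator_of_mem hpB,
        Set.indicator_of_notMem hpA]; ring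
    · rw [Set.indicator_of_notMem (fun h => h.elim hpA hpB), Set.indicator_of_notMem hpA,
        Set.indicator_of_notMem hpB]; ring
  have e1 : (∑ i ∈ s.J, π (H i) * σ (A ∪ B) i)
      = (∑ i ∈ s.J, π (H i) * σ A i) + (∑ i ∈ s.J, π (H i) * σ B i) := by
    rw [← Finset.sum_add_distrib]
    exact Finset.sum_congr rfl h1
  have e2 : (∑ C ∈ s.T, π (C \ HJ H s) * Set.indicator (A ∪ B) (fun _ => (1 : ℝ)) (pick H F K s C))
      = (∑ C ∈ s.T, π (C \ HJ H s) * Set.indicator A (fun _ => (1 : ℝ)) (pick H F K s C))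
        + (∑ C ∈ s.T, π (C \ HJ H s) * Set.indicator B (fun _ => (1 : ℝ)) (pick H F K s C)) := by
    rw [← Finset.sum_add_distrib]
    exact Finset.sum_congr rfl h2
  unfold nus
  rw [e1, e2]
  ring

lemma nus_univ (s : Stg H 𝒜L) : nus H π σ F K s Set.univ = 1 := by
  have h1 : ∀ i ∈ s.J, π (H i) * σ Set.univ i = π (H i) := by
    intro i _
    have hu : σ Set.univ i = 1 := (hσ i).1.2.1
    rw [hu, mul_one]
  have h2 : ∀ B ∈ s.T, π (B \ HJ H s) * Set.indicator Set.univ (fun _ => (1 : ℝ)) (pick H F K s B)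
      = π (B \ HJ H s) := by
    intro B _
    rw [Set.indicator_of_mem (Set.mem_univ _), mul_one]
  have e1 : (∑ i ∈ s.J, π (H i) * σ Set.univ i) = ∑ i ∈ s.J, π (H i) :=
    Finset.sum_congr rfl h1
  have e2 : (∑ B ∈ s.T, π (B \ HJ H s) * Set.indicator Set.univ (fun _ => (1 : ℝ)) (pick H F K s B))
      = ∑ B ∈ s.T, π (B \ HJ H s) := Finset.sum_congr rfl h2
  have hU := fap_biUnion hFO.1 hπ s.T (fun B => B \ HJ H s)
    (fun B hB => sf_diff hFO.1 (s.hsub hB) (HJ_mem hH hFO hπ s).1)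
    (fun B hB B' hB' hne => Set.disjoint_of_subset Set.diff_subset Set.diff_subset
      (s.hdisj B hB B' hB' hne))
  have hUnion : (⋃ B ∈ s.T, B \ HJ H s) = Set.univ \ HJ H s := by
    ext x
    simp only [Set.mem_iUnion, Set.mem_diff, Set.mem_univ, true_and, exists_prop]
    constructor
    · rintro ⟨B, hB, hxB, hx⟩; exact hx
    · intro hx
      have hxc : x ∈ ⋃₀ (↑s.T : Set (Set Ω)) := by rw [s.hcov]; trivial
      obtain ⟨B, hB, hxB⟩ := hxc
      exact ⟨B, hB, hxB, hx⟩
  have hU2 : π (Set.univ \ HJ H s) = ∑ B ∈ s.T, π (B \ HJ H s) := by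
    rw [← hUnion]; exact hU.2
  have hdecomp := fap_inter_add hFO.1 hπ hFO.1.1 (HJ_mem hH hFO hπ s).1
  rw [Set.univ_inter, (HJ_mem hH hFO hπ s).2, hπ.2.1] at hdecomp
  unfold nus
  rw [e1, e2]
  linarith

lemma nus_le_one {G : Set Ω} (hG : G ∈ 𝒜) (s : Stg H 𝒜L) : nus H π σ F K s G ≤ 1 := by
  have hadd := nus_add (F := F) (K := K) hH hFO hπ h𝒜 hLsub hσ hG (h𝒜.2.1 _ hG)
    disjoint_compl_right s
  rw [Set.union_compl_self, nus_univ hH hFO hπ h𝒜 hLsub hσ s] at hadd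
  have hnn := nus_nonneg (F := F) (K := K) hH hFO hπ h𝒜 hLsub hσ (h𝒜.2.1 _ hG) s
  linarith

lemma nus_marg (s : Stg H 𝒜L) {B' : Set Ω} (hB' : B' ∈ 𝒜L)
    (href : ∀ B ∈ s.T, B ⊆ B' ∨ B ⊆ B'ᶜ) : nus H π σ F K s B' = π B' := by
  classical
  have hmemH : ∀ j, H j ∈ 𝒜 := fun j => hLsub (hFO.2.1 j)
  have h1 : ∀ i ∈ s.J, π (H i) * σ B' i = π (B' ∩ H i) := by
    intro i _
    rcases part_dichot hH hFO hB' i with hd | hsubi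
    · rw [strat_zero h𝒜 hσ hmemH (hLsub hB') (by rw [Set.inter_comm]; exact hd), mul_zero,
        pi_cell_of_disj hH hFO hπ hd]
    · rw [(hσ i).2 B' (hLsub hB') hsubi, mul_one, pi_cell_of_subset hH hFO hπ hsubi]
  have h2 : ∀ B ∈ s.T, π (B \ HJ H s) * Set.indicator B' (fun _ => (1 : ℝ)) (pick H F K s B)
      = if B ⊆ B' then π (B \ HJ H s) else 0 := by
    intro B hB
    by_cases hne : (B \ HJ H s).Nonempty
    · have hpm := pick_mem (F := F) (K := K) hne
      rcases href B hB with hsubB | hsubBc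
      · rw [if_pos hsubB, Set.indicator_of_mem (hsubB hpm.1), mul_one]
      · by_cases hBB' : B ⊆ B'
        · exact absurd (hBB' hpm.1) (hsubBc hpm.1)
        · rw [if_neg hBB', Set.indicator_of_notMem (fun hc => (hsubBc hpm.1) hc), mul_zero]
    · have he : B \ HJ H s = ∅ := Set.not_nonempty_iff_eq_empty.mp hne
      simp [he, fap_empty hFO.1 hπ]
  have e1 : (∑ i ∈ s.J, π (H i) * σ B' i) = ∑ i ∈ s.J, π (B' ∩ H i) :=
    Finset.sum_congr rfl h1
  have e2 : (∑ B ∈ s.T, π (B \ HJ H s) * Set.indicator B' (fun _ => (1 : ℝ)) (pick H F K s B))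
      = ∑ B ∈ s.T, (if B ⊆ B' then π (B \ HJ H s) else 0) := Finset.sum_congr rfl h2
  have hU := fap_biUnion hFO.1 hπ (s.T.filter (fun B => B ⊆ B')) (fun B => B \ HJ H s)
    (fun B hB => sf_diff hFO.1 (s.hsub (Finset.mem_filter.mp hB).1) (HJ_mem hH hFO hπ s).1)
    (fun B hB C hC hne => Set.disjoint_of_subset Set.diff_subset Set.diff_subset
      (s.hdisj B (Finset.mem_filter.mp hB).1 C (Finset.mem_filter.mp hC).1 hne))
  have hUnion : (⋃ B ∈ s.T.filter (fun B => B ⊆ B'), B \ HJ H s) = B' \ HJ H s := by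
    ext x
    simp only [Set.mem_iUnion, Set.mem_diff, Finset.mem_filter, exists_prop]
    constructor
    · rintro ⟨B, ⟨hBT, hBsub⟩, hxB, hx⟩; exact ⟨hBsub hxB, hx⟩
    · rintro ⟨hxB', hx⟩
      have hxc : x ∈ ⋃₀ (↑s.T : Set (Set Ω)) := by rw [s.hcov]; trivial
      obtain ⟨B, hBT, hxB⟩ := hxc
      have hBsub : B ⊆ B' := (href B hBT).resolve_right (fun hc => (hc hxB) hxB')
      exact ⟨B, ⟨hBT, hBsub⟩, hxB, hx⟩
  have hU2 : π (B' \ HJ H s) = ∑ B ∈ s.T, (if B ⊆ B' then π (B \ HJ H s) else 0) := by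
    rw [← hUnion, ← Finset.sum_filter]
    exact hU.2
  have hdec := pi_decomp hH hFO hπ hB' s
  unfold nus
  rw [e1, e2]
  linarith

lemma nus_adapt (s : Stg H 𝒜L) {G : Set Ω} (hG : G ∈ 𝒜) {i : ι} (hi : i ∈ s.J) :
    nus H π σ F K s (G ∩ H i) = π (H i) * σ G i := by
  have hmemH : ∀ j, H j ∈ 𝒜 := fun j => hLsub (hFO.2.1 j)
  have hGH : G ∩ H i ∈ 𝒜 := sf_inter h𝒜 hG (hmemH i)
  have h1 : (∑ j ∈ s.J, π (H j) * σ (G ∩ H i) j) = π (H i) * σ G i := by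
    rw [Finset.sum_eq_single_of_mem i hi]
    · rw [strat_inter_self h𝒜 hσ hmemH hG i]
    · intro j hj hne
      have hdisj : (G ∩ H i) ∩ H j = ∅ :=
        Set.eq_empty_iff_forall_notMem.mpr fun x hx => (hH.2.1 hne).le_bot ⟨hx.2, hx.1.2⟩
      rw [strat_zero h𝒜 hσ hmemH hGH hdisj, mul_zero]
  have h2 : ∀ B ∈ s.T, π (B \ HJ H s) * Set.indicator (G ∩ H i) (fun _ => (1 : ℝ)) (pick H F K s B) = 0 := by
    intro B hB
    by_cases hne : (B \ HJ H s).Nonempty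
    · have hpm := pick_mem (F := F) (K := K) hne
      have hnotin : pick H F K s B ∉ H i := fun hc => hpm.2 (Set.mem_iUnion₂.mpr ⟨i, hi, hc⟩)
      rw [Set.indicator_of_notMem (fun hc => hnotin hc.2), mul_zero]
    · simp [Set.not_nonempty_iff_eq_empty.mp hne, fap_empty hFO.1 hπ]
  have e2 : (∑ B ∈ s.T, π (B \ HJ H s) * Set.indicator (G ∩ H i) (fun _ => (1 : ℝ)) (pick H F K s B))
      = ∑ B ∈ s.T, (0 : ℝ) := Finset.sum_congr rfl h2
  unfold nus
  rw [h1, e2]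
  simp

variable {μ : Set Ω → ℝ}

lemma nus_FK_le (s : Stg H 𝒜L) (hμ : IsFAP 𝒜 μ)
    (hmarg : ∀ B ∈ 𝒜L, μ B = π B)
    (hadapt : ∀ G ∈ 𝒜, ∀ i, μ (G ∩ H i) = π (H i) * σ G i)
    (hFK : F ∩ K ∈ 𝒜) :
    nus H π σ F K s (F ∩ K) ≤ μ (F ∩ K) := by
  classical
  have hHJL : HJ H s ∈ 𝒜L := (HJ_mem hH hFO hπ s).1
  have hHJ : HJ H s ∈ 𝒜 := hLsub hHJL
  have hsplit := fap_inter_add h𝒜 hμ hFK hHJ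
  have hu := fap_biUnion h𝒜 hμ s.J (fun i => (F ∩ K) ∩ H i)
    (fun i _ => sf_inter h𝒜 hFK (hLsub (hFO.2.1 i)))
    (fun i _ j _ hne => Set.disjoint_of_subset Set.inter_subset_right Set.inter_subset_right
      (hH.2.1 hne))
  have hEq : (F ∩ K) ∩ HJ H s = ⋃ i ∈ s.J, (F ∩ K) ∩ H i := by
    unfold HJ; rw [Set.inter_iUnion₂]
  have hsum1 : μ ((F ∩ K) ∩ HJ H s) = ∑ i ∈ s.J, π (H i) * σ (F ∩ K) i := by
    rw [hEq]
    rw [show μ (⋃ i ∈ s.J, (F ∩ K) ∩ H i) = ∑ i ∈ s.J, μ ((F ∩ K) ∩ H i) from hu.2]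
    exact Finset.sum_congr rfl (fun i _ => hadapt (F ∩ K) hFK i)
  have hrem : ∀ B ∈ s.T, B \ HJ H s ∈ 𝒜L := fun B hB => sf_diff hFO.1 (s.hsub hB) hHJL
  have hcell := fap_biUnion h𝒜 hμ s.T (fun B => ((F ∩ K) \ HJ H s) ∩ B)
    (fun B hB => sf_inter h𝒜 (sf_diff h𝒜 hFK hHJ) (hLsub (s.hsub hB)))
    (fun B hB B' hB' hne => Set.disjoint_of_subset Set.inter_subset_right Set.inter_subset_right
      (s.hdisj B hB B' hB' hne))
  have hcover : (⋃ B ∈ s.T, ((F ∩ K) \ HJ H s) ∩ B) = (F ∩ K) \ HJ H s := by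
    ext x
    simp only [Set.mem_iUnion, Set.mem_inter_iff, exists_prop]
    constructor
    · rintro ⟨B, hB, hx, _⟩; exact hx
    · intro hx
      have hxc : x ∈ ⋃₀ (↑s.T : Set (Set Ω)) := by rw [s.hcov]; trivial
      obtain ⟨B, hB, hxB⟩ := hxc
      exact ⟨B, hB, hx, hxB⟩
  have hterm : ∀ B ∈ s.T,
      π (B \ HJ H s) * Set.indicator (F ∩ K) (fun _ => (1 : ℝ)) (pick H F K s B)
        ≤ μ (((F ∩ K) \ HJ H s) ∩ B) := by
    intro B hB
    by_cases hp : pick H F K s B ∈ F ∩ K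
    · rw [Set.indicator_of_mem hp, mul_one]
      have hsubset : B \ HJ H s ⊆ ((F ∩ K) \ HJ H s) ∩ B := fun x hx =>
        ⟨⟨pick_FK hp hx, hx.2⟩, hx.1⟩
      calc π (B \ HJ H s) = μ (B \ HJ H s) := (hmarg _ (hrem B hB)).symm
        _ ≤ μ (((F ∩ K) \ HJ H s) ∩ B) := fap_mono h𝒜 hμ (hLsub (hrem B hB))
            (sf_inter h𝒜 (sf_diff h𝒜 hFK hHJ) (hLsub (s.hsub hB))) hsubset
    · rw [Set.indicator_of_notMem hp, mul_zero]
      exact fap_nonneg hμ (sf_inter h𝒜 (sf_diff h𝒜 hFK hHJ) (hLsub (s.hsub hB)))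
  unfold nus
  rw [hsplit, ← hsum1]
  refine add_le_add (le_refl _) ?_
  calc (∑ B ∈ s.T, π (B \ HJ H s) * Set.indicator (F ∩ K) (fun _ => (1 : ℝ)) (pick H F K s B))
      ≤ ∑ B ∈ s.T, μ (((F ∩ K) \ HJ H s) ∩ B) := Finset.sum_le_sum hterm
    _ = μ ((F ∩ K) \ HJ H s) := by
        conv_rhs => rw [← hcover]
        exact hcell.2.symm

lemma nus_FcK_ge (s : Stg H 𝒜L) (hμ : IsFAP 𝒜 μ)
    (hmarg : ∀ B ∈ 𝒜L, μ B = π B)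
    (hadapt : ∀ G ∈ 𝒜, ∀ i, μ (G ∩ H i) = π (H i) * σ G i)
    (hFcK : Fᶜ ∩ K ∈ 𝒜) :
    μ (Fᶜ ∩ K) ≤ nus H π σ F K s (Fᶜ ∩ K) := by
  classical
  have hHJL : HJ H s ∈ 𝒜L := (HJ_mem hH hFO hπ s).1
  have hHJ : HJ H s ∈ 𝒜 := hLsub hHJL
  have hsplit := fap_inter_add h𝒜 hμ hFcK hHJ
  have hu := fap_biUnion h𝒜 hμ s.J (fun i => (Fᶜ ∩ K) ∩ H i)
    (fun i _ => sf_inter h𝒜 hFcK (hLsub (hFO.2.1 i)))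
    (fun i _ j _ hne => Set.disjoint_of_subset Set.inter_subset_right Set.inter_subset_right
      (hH.2.1 hne))
  have hEq : (Fᶜ ∩ K) ∩ HJ H s = ⋃ i ∈ s.J, (Fᶜ ∩ K) ∩ H i := by
    unfold HJ; rw [Set.inter_iUnion₂]
  have hsum1 : μ ((Fᶜ ∩ K) ∩ HJ H s) = ∑ i ∈ s.J, π (H i) * σ (Fᶜ ∩ K) i := by
    rw [hEq]
    rw [show μ (⋃ i ∈ s.J, (Fᶜ ∩ K) ∩ H i) = ∑ i ∈ s.J, μ ((Fᶜ ∩ K) ∩ H i) from hu.2]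
    exact Finset.sum_congr rfl (fun i _ => hadapt (Fᶜ ∩ K) hFcK i)
  have hrem : ∀ B ∈ s.T, B \ HJ H s ∈ 𝒜L := fun B hB => sf_diff hFO.1 (s.hsub hB) hHJL
  have hcell := fap_biUnion h𝒜 hμ s.T (fun B => ((Fᶜ ∩ K) \ HJ H s) ∩ B)
    (fun B hB => sf_inter h𝒜 (sf_diff h𝒜 hFcK hHJ) (hLsub (s.hsub hB)))
    (fun B hB B' hB' hne => Set.disjoint_of_subset Set.inter_subset_right Set.inter_subset_right
      (s.hdisj B hB B' hB' hne))
  have hcover : (⋃ B ∈ s.T, ((Fᶜ ∩ K) \ HJ H s) ∩ B) = (Fᶜ ∩ K) \ HJ H s := by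
    ext x
    simp only [Set.mem_iUnion, Set.mem_inter_iff, exists_prop]
    constructor
    · rintro ⟨B, hB, hx, _⟩; exact hx
    · intro hx
      have hxc : x ∈ ⋃₀ (↑s.T : Set (Set Ω)) := by rw [s.hcov]; trivial
      obtain ⟨B, hB, hxB⟩ := hxc
      exact ⟨B, hB, hx, hxB⟩
  have hterm : ∀ B ∈ s.T,
      μ (((Fᶜ ∩ K) \ HJ H s) ∩ B)
        ≤ π (B \ HJ H s) * Set.indicator (Fᶜ ∩ K) (fun _ => (1 : ℝ)) (pick H F K s B) := by
    intro B hB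
    by_cases hne : ((B \ HJ H s) ∩ (Fᶜ ∩ K)).Nonempty
    · have hp := pick_FcK hne
      rw [Set.indicator_of_mem hp, mul_one]
      have hsubset : ((Fᶜ ∩ K) \ HJ H s) ∩ B ⊆ B \ HJ H s := fun x hx => ⟨hx.2, hx.1.2⟩
      calc μ (((Fᶜ ∩ K) \ HJ H s) ∩ B)
          ≤ μ (B \ HJ H s) := fap_mono h𝒜 hμ
            (sf_inter h𝒜 (sf_diff h𝒜 hFcK hHJ) (hLsub (s.hsub hB))) (hLsub (hrem B hB)) hsubset
        _ = π (B \ HJ H s) := hmarg _ (hrem B hB)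
    · have hempty : ((Fᶜ ∩ K) \ HJ H s) ∩ B = ∅ := by
        ext x
        simp only [Set.mem_inter_iff, Set.mem_diff, Set.mem_empty_iff_false, iff_false]
        rintro ⟨⟨hxF, hxH⟩, hxB⟩
        exact hne ⟨x, ⟨hxB, hxH⟩, hxF⟩
      rw [hempty, fap_empty h𝒜 hμ]
      exact mul_nonneg (fap_nonneg hπ (hrem B hB))
        (Set.indicator_nonneg (fun _ _ => by norm_num) _)
  unfold nus
  rw [hsplit, ← hsum1]
  refine add_le_add (le_refl _) ?_
  calc μ ((Fᶜ ∩ K) \ HJ H s)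
      = ∑ B ∈ s.T, μ (((Fᶜ ∩ K) \ HJ H s) ∩ B) := by
        conv_lhs => rw [← hcover]
        exact hcell.2
    _ ≤ ∑ B ∈ s.T, π (B \ HJ H s) * Set.indicator (Fᶜ ∩ K) (fun _ => (1 : ℝ)) (pick H F K s B) :=
        Finset.sum_le_sum hterm

end

section
include hH hFO hπ h𝒜 hLsub hσ
variable {𝓤 : Ultrafilter (Stg H 𝒜L)}

lemma nulim_tendsto {G : Set Ω} (hG : G ∈ 𝒜) :
    Filter.Tendsto (fun s => nus H π σ F K s G) (↑𝓤 : Filter (Stg H 𝒜L)) (𝓝 (nulim H π σ F K 𝓤 G)) := by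
  have hb : ∀ s, nus H π σ F K s G ∈ Set.Icc (0 : ℝ) 1 := fun s =>
    ⟨nus_nonneg hH hFO hπ h𝒜 hLsub hσ hG s, nus_le_one hH hFO hπ h𝒜 hLsub hσ hG s⟩
  have hmap : ↑(Ultrafilter.map (fun s => nus H π σ F K s G) 𝓤) ≤ 𝓟 (Set.Icc (0 : ℝ) 1) := by
    rw [Filter.le_principal_iff, Ultrafilter.coe_map, Filter.mem_map]
    have hpre : (fun s : Stg H 𝒜L => nus H π σ F K s G) ⁻¹' Set.Icc 0 1 = Set.univ := by
      ext s; simpa using hb s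
    rw [hpre]
    exact Filter.univ_mem
  obtain ⟨x, _, hle⟩ := isCompact_Icc.ultrafilter_le_nhds _ hmap
  rw [Ultrafilter.coe_map] at hle
  have ht : Filter.Tendsto (fun s => nus H π σ F K s G) (↑𝓤 : Filter (Stg H 𝒜L)) (𝓝 x) := hle
  unfold nulim
  rw [ht.limUnder_eq]
  exact ht

lemma nulim_nonneg {G : Set Ω} (hG : G ∈ 𝒜) : 0 ≤ nulim H π σ F K 𝓤 G :=
  ge_of_tendsto (nulim_tendsto hH hFO hπ h𝒜 hLsub hσ hG)
    (Filter.Eventually.of_forall fun s => nus_nonneg hH hFO hπ h𝒜 hLsub hσ hG s)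

lemma nulim_le_one {G : Set Ω} (hG : G ∈ 𝒜) : nulim H π σ F K 𝓤 G ≤ 1 :=
  le_of_tendsto (nulim_tendsto hH hFO hπ h𝒜 hLsub hσ hG)
    (Filter.Eventually.of_forall fun s => nus_le_one hH hFO hπ h𝒜 hLsub hσ hG s)

lemma nulim_fap : IsFAP 𝒜 (nulim H π σ F K 𝓤) := by
  refine ⟨fun A hA => ⟨nulim_nonneg hH hFO hπ h𝒜 hLsub hσ hA,
    nulim_le_one hH hFO hπ h𝒜 hLsub hσ hA⟩, ?_, ?_⟩
  · have h1 : Filter.Tendsto (fun s : Stg H 𝒜L => nus H π σ F K s Set.univ) ↑𝓤 (𝓝 1) := by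
      have he : (fun s : Stg H 𝒜L => nus H π σ F K s Set.univ) = fun _ => (1 : ℝ) :=
        funext (nus_univ hH hFO hπ h𝒜 hLsub hσ)
      rw [he]
      exact tendsto_const_nhds
    exact tendsto_nhds_unique (nulim_tendsto hH hFO hπ h𝒜 hLsub hσ h𝒜.1) h1
  · intro A hA B hB hd
    have hAB := nulim_tendsto (F := F) (K := K) hH hFO hπ h𝒜 hLsub hσ (h𝒜.2.2 A hA B hB) (𝓤 := 𝓤)
    have hsum := (nulim_tendsto (F := F) (K := K) hH hFO hπ h𝒜 hLsub hσ hA (𝓤 := 𝓤)).add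
      (nulim_tendsto (F := F) (K := K) hH hFO hπ h𝒜 hLsub hσ hB (𝓤 := 𝓤))
    have he : (fun s => nus H π σ F K s A + nus H π σ F K s B)
        = fun s => nus H π σ F K s (A ∪ B) :=
      funext fun s => (nus_add hH hFO hπ h𝒜 hLsub hσ hA hB hd s).symm
    rw [he] at hsum
    exact tendsto_nhds_unique hAB hsum

lemma nulim_marg (h𝓤 : ↑𝓤 ≤ (atTop : Filter (Stg H 𝒜L))) {B' : Set Ω} (hB' : B' ∈ 𝒜L) :
    nulim H π σ F K 𝓤 B' = π B' := by
  classical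
  haveI : Nonempty (Stg H 𝒜L) := stg_nonempty hFO.1
  haveI : IsDirected (Stg H 𝒜L) (· ≤ ·) := stg_directed hFO.1
  have hsub : ↑({B', B'ᶜ} : Finset (Set Ω)) ⊆ 𝒜L := by
    intro A hA
    simp only [Finset.coe_insert, Finset.coe_singleton, Set.mem_insert_iff,
      Set.mem_singleton_iff] at hA
    rcases hA with rfl | rfl
    · exact hB'
    · exact hFO.1.2.1 _ hB'
  have hdisj : ∀ A ∈ ({B', B'ᶜ} : Finset (Set Ω)), ∀ C ∈ ({B', B'ᶜ} : Finset (Set Ω)),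
      A ≠ C → Disjoint A C := by
    intro A hA C hC hne
    simp only [Finset.mem_insert, Finset.mem_singleton] at hA hC
    rcases hA with rfl | rfl <;> rcases hC with rfl | rfl
    · exact absurd rfl hne
    · exact disjoint_compl_right
    · exact disjoint_compl_left
    · exact absurd rfl hne
  have hcov : ⋃₀ (↑({B', B'ᶜ} : Finset (Set Ω)) : Set (Set Ω)) = Set.univ := by
    simp [Set.sUnion_insert, Set.union_compl_self]
  set s₀ : Stg H 𝒜L := ⟨{B', B'ᶜ}, ∅, hsub, hdisj, hcov⟩ with hs₀
  have hev : ∀ᶠ s in (atTop : Filter (Stg H 𝒜L)), nus H π σ F K s B' = π B' := by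
    rw [Filter.eventually_atTop]
    refine ⟨s₀, fun s hs => nus_marg hH hFO hπ h𝒜 hLsub hσ s hB' (fun B hB => ?_)⟩
    obtain ⟨A, hA, hBA⟩ := hs.2 B hB
    have hA' : A = B' ∨ A = B'ᶜ := by
      simpa [hs₀, Finset.mem_insert, Finset.mem_singleton] using hA
    rcases hA' with rfl | rfl
    · exact Or.inl hBA
    · exact Or.inr hBA
  have hev' : ∀ᶠ s in (↑𝓤 : Filter (Stg H 𝒜L)), nus H π σ F K s B' = π B' :=
    hev.filter_mono h𝓤
  have hcongr : (fun _ : Stg H 𝒜L => π B') =ᶠ[(↑𝓤 : Filter (Stg H 𝒜L))]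
      (fun s => nus H π σ F K s B') := hev'.mono fun s hs => hs.symm
  have hconst : Filter.Tendsto (fun s => nus H π σ F K s B') (↑𝓤 : Filter (Stg H 𝒜L))
      (𝓝 (π B')) := Filter.Tendsto.congr' hcongr tendsto_const_nhds
  exact tendsto_nhds_unique (nulim_tendsto hH hFO hπ h𝒜 hLsub hσ (hLsub hB')) hconst

lemma nulim_adapt (h𝓤 : ↑𝓤 ≤ (atTop : Filter (Stg H 𝒜L))) {G : Set Ω} (hG : G ∈ 𝒜) (i : ι) :
    nulim H π σ F K 𝓤 (G ∩ H i) = π (H i) * σ G i := by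
  classical
  haveI : Nonempty (Stg H 𝒜L) := stg_nonempty hFO.1
  haveI : IsDirected (Stg H 𝒜L) (· ≤ ·) := stg_directed hFO.1
  have hsub : ↑({Set.univ} : Finset (Set Ω)) ⊆ 𝒜L := by simp [hFO.1.1]
  have hdisj : ∀ A ∈ ({Set.univ} : Finset (Set Ω)), ∀ C ∈ ({Set.univ} : Finset (Set Ω)),
      A ≠ C → Disjoint A C := by simp
  have hcov : ⋃₀ (↑({Set.univ} : Finset (Set Ω)) : Set (Set Ω)) = Set.univ := by simp
  set s₀ : Stg H 𝒜L := ⟨{Set.univ}, {i}, hsub, hdisj, hcov⟩ with hs₀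
  have hev : ∀ᶠ s in (atTop : Filter (Stg H 𝒜L)),
      nus H π σ F K s (G ∩ H i) = π (H i) * σ G i := by
    rw [Filter.eventually_atTop]
    exact ⟨s₀, fun s hs => nus_adapt hH hFO hπ h𝒜 hLsub hσ s hG
      (hs.1 (Finset.mem_singleton_self i))⟩
  have hev' := hev.filter_mono h𝓤
  have hcongr : (fun _ : Stg H 𝒜L => π (H i) * σ G i) =ᶠ[(↑𝓤 : Filter (Stg H 𝒜L))]
      (fun s => nus H π σ F K s (G ∩ H i)) := hev'.mono fun s hs => hs.symm
  have hconst : Filter.Tendsto (fun s => nus H π σ F K s (G ∩ H i)) (↑𝓤 : Filter (Stg H 𝒜L))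
      (𝓝 (π (H i) * σ G i)) := Filter.Tendsto.congr' hcongr tendsto_const_nhds
  exact tendsto_nhds_unique
    (nulim_tendsto hH hFO hπ h𝒜 hLsub hσ (sf_inter h𝒜 hG (hLsub (hFO.2.1 i)))) hconst

lemma nulim_FK_le {μ : Set Ω → ℝ} (hμ : IsFAP 𝒜 μ)
    (hmarg : ∀ B ∈ 𝒜L, μ B = π B)
    (hadapt : ∀ G ∈ 𝒜, ∀ i, μ (G ∩ H i) = π (H i) * σ G i)
    (hFK : F ∩ K ∈ 𝒜) : nulim H π σ F K 𝓤 (F ∩ K) ≤ μ (F ∩ K) :=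
  le_of_tendsto (nulim_tendsto hH hFO hπ h𝒜 hLsub hσ hFK)
    (Filter.Eventually.of_forall fun s => nus_FK_le hH hFO hπ h𝒜 hLsub hσ s hμ hmarg hadapt hFK)

lemma nulim_FcK_ge {μ : Set Ω → ℝ} (hμ : IsFAP 𝒜 μ)
    (hmarg : ∀ B ∈ 𝒜L, μ B = π B)
    (hadapt : ∀ G ∈ 𝒜, ∀ i, μ (G ∩ H i) = π (H i) * σ G i)
    (hFcK : Fᶜ ∩ K ∈ 𝒜) : μ (Fᶜ ∩ K) ≤ nulim H π σ F K 𝓤 (Fᶜ ∩ K) :=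
  ge_of_tendsto (nulim_tendsto hH hFO hπ h𝒜 hLsub hσ hFcK)
    (Filter.Eventually.of_forall fun s => nus_FcK_ge hH hFO hπ h𝒜 hLsub hσ s hμ hmarg hadapt hFcK)

end

end StageLemmas

noncomputable def wmin {α : Type*} (S : Set α) (hS : S.Nonempty) : α :=
  (IsWellFounded.wf (r := WellOrderingRel (α := α))).min S hS

lemma wmin_mem {α : Type*} (S : Set α) (hS : S.Nonempty) : wmin S hS ∈ S :=
  WellFounded.min_mem _ S hS

lemma wmin_not_lt {α : Type*} (S : Set α) (hS : S.Nonempty) {x : α} (hx : x ∈ S) :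
    ¬ WellOrderingRel x (wmin S hS) :=
  WellFounded.not_lt_min _ S hx

lemma wmin_eq {α : Type*} (S : Set α) (hS : S.Nonempty) {x : α} (hx : x ∈ S)
    (hmin : ∀ y ∈ S, ¬ WellOrderingRel y x) : wmin S hS = x := by
  rcases trichotomous_of WellOrderingRel (wmin S hS) x with h | h | h
  · exact absurd h (hmin _ (wmin_mem S hS))
  · exact h
  · exact absurd h (wmin_not_lt S hS hx)

noncomputable def chainP [Nonempty Ω] (H : ι → Set Ω) (σ : Set Ω → ι → ℝ) (ν : Set Ω → ℝ) :
    Set Ω → Set Ω → ℝ := fun E C =>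
  if 0 < ν C then ν (E ∩ C) / ν C
  else if h2 : ∃ i, ν (H i) = 0 ∧ 0 < σ C i then
    σ (E ∩ C) (wmin {i | ν (H i) = 0 ∧ 0 < σ C i} h2) /
      σ C (wmin {i | ν (H i) = 0 ∧ 0 < σ C i} h2)
  else if h3 : C.Nonempty then (if wmin C h3 ∈ E ∩ C then 1 else 0)
  else 0

section ChainP

variable [Nonempty Ω] {H : ι → Set Ω} {𝒜 : Set (Set Ω)} {σ : Set Ω → ι → ℝ} {ν : Set Ω → ℝ}

lemma chainP_br1 (E C : Set Ω) (h : 0 < ν C) :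
    chainP H σ ν E C = ν (E ∩ C) / ν C := by
  unfold chainP; rw [if_pos h]

lemma chainP_br2 (E C : Set Ω) (h : ¬ 0 < ν C) (h2 : ∃ i, ν (H i) = 0 ∧ 0 < σ C i) :
    chainP H σ ν E C = σ (E ∩ C) (wmin {i | ν (H i) = 0 ∧ 0 < σ C i} h2) /
      σ C (wmin {i | ν (H i) = 0 ∧ 0 < σ C i} h2) := by
  unfold chainP; rw [if_neg h, dif_pos h2]

lemma chainP_br3 (E C : Set Ω) (h : ¬ 0 < ν C) (h2 : ¬ ∃ i, ν (H i) = 0 ∧ 0 < σ C i)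
    (h3 : C.Nonempty) :
    chainP H σ ν E C = (if wmin C h3 ∈ E ∩ C then 1 else 0) := by
  unfold chainP; rw [if_neg h, dif_neg h2, dif_pos h3]

lemma chainP_congr (E E' C : Set Ω) (h : E ∩ C = E' ∩ C) :
    chainP H σ ν E C = chainP H σ ν E' C := by
  unfold chainP; simp only [h]

variable (hH : IsPartition H) (hFO : IsFieldOver H 𝒜L) (hπ : IsFAP 𝒜L π)
  (h𝒜 : IsSetField 𝒜) (hLsub : 𝒜L ⊆ 𝒜) (hσ : IsStrategy 𝒜 H σ)
  (hν : IsFAP 𝒜 ν) (hmarg : ∀ B ∈ 𝒜L, ν B = π B)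
  (hadapt : ∀ G ∈ 𝒜, ∀ i, ν (G ∩ H i) = π (H i) * σ G i)

include hH hFO hπ h𝒜 hLsub hσ hν hmarg hadapt

lemma chainP_mem : chainP H σ ν ∈ FCPSet 𝒜 𝒜L H π σ := by
  classical
  have hmemH : ∀ j, H j ∈ 𝒜 := fun j => hLsub (hFO.2.1 j)
  -- (C1)
  have hC1 : ∀ E ∈ 𝒜, ∀ C ∈ 𝒜, C.Nonempty → chainP H σ ν E C = chainP H σ ν (E ∩ C) C := by
    intro E _ C _ _
    exact chainP_congr E (E ∩ C) C (by ext x; simp only [Set.mem_inter_iff]; tauto)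
  -- (C2)
  have hC2 : ∀ C ∈ 𝒜, C.Nonempty → IsFAP 𝒜 (fun E => chainP H σ ν E C) := by
    intro C hC hCne
    refine ⟨?_, ?_, ?_⟩
    · intro E hE
      show 0 ≤ chainP H σ ν E C ∧ chainP H σ ν E C ≤ 1
      have hECm : E ∩ C ∈ 𝒜 := sf_inter h𝒜 hE hC
      by_cases h1 : 0 < ν C
      · rw [chainP_br1 E C h1]
        exact ⟨div_nonneg (fap_nonneg hν hECm) h1.le,
          (div_le_one h1).mpr (fap_mono h𝒜 hν hECm hC Set.inter_subset_right)⟩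
      · by_cases h2 : ∃ i, ν (H i) = 0 ∧ 0 < σ C i
        · rw [chainP_br2 E C h1 h2]
          have hi₀ := wmin_mem {i | ν (H i) = 0 ∧ 0 < σ C i} h2
          exact ⟨div_nonneg (fap_nonneg (hσ _).1 hECm) hi₀.2.le,
            (div_le_one hi₀.2).mpr (fap_mono h𝒜 (hσ _).1 hECm hC Set.inter_subset_right)⟩
        · rw [chainP_br3 E C h1 h2 hCne]
          split_ifs <;> norm_num
    · show chainP H σ ν Set.univ C = 1
      by_cases h1 : 0 < ν C
      · rw [chainP_br1 Set.univ C h1, Set.univ_inter]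
        exact div_self (ne_of_gt h1)
      · by_cases h2 : ∃ i, ν (H i) = 0 ∧ 0 < σ C i
        · rw [chainP_br2 Set.univ C h1 h2, Set.univ_inter]
          exact div_self (ne_of_gt (wmin_mem {i | ν (H i) = 0 ∧ 0 < σ C i} h2).2)
        · rw [chainP_br3 Set.univ C h1 h2 hCne]
          simp only [Set.univ_inter]
          rw [if_pos (wmin_mem C hCne)]
    · intro A hA B hB hd
      show chainP H σ ν (A ∪ B) C = chainP H σ ν A C + chainP H σ ν B C
      have hunion : (A ∪ B) ∩ C = (A ∩ C) ∪ (B ∩ C) := Set.union_inter_distrib_right A B C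
      have hdAC : Disjoint (A ∩ C) (B ∩ C) :=
        Set.disjoint_of_subset Set.inter_subset_left Set.inter_subset_left hd
      have hACm : A ∩ C ∈ 𝒜 := sf_inter h𝒜 hA hC
      have hBCm : B ∩ C ∈ 𝒜 := sf_inter h𝒜 hB hC
      by_cases h1 : 0 < ν C
      · rw [chainP_br1 (A ∪ B) C h1, chainP_br1 A C h1, chainP_br1 B C h1, hunion,
          hν.2.2 _ hACm _ hBCm hdAC, add_div]
      · by_cases h2 : ∃ i, ν (H i) = 0 ∧ 0 < σ C i
        · set i₀ := wmin {i | ν (H i) = 0 ∧ 0 < σ C i} h2 with hi₀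
          have hσadd : σ ((A ∩ C) ∪ (B ∩ C)) i₀ = σ (A ∩ C) i₀ + σ (B ∩ C) i₀ :=
            (hσ i₀).1.2.2 _ hACm _ hBCm hdAC
          rw [chainP_br2 (A ∪ B) C h1 h2, chainP_br2 A C h1 h2, chainP_br2 B C h1 h2, hunion,
            ← hi₀, hσadd, add_div]
        · rw [chainP_br3 (A ∪ B) C h1 h2 hCne, chainP_br3 A C h1 h2 hCne,
            chainP_br3 B C h1 h2 hCne]
          set m := wmin C hCne
          by_cases hmA : m ∈ A ∩ C <;> by_cases hmB : m ∈ B ∩ C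
          · exact absurd hmA (fun hc => Set.disjoint_left.mp hdAC hc hmB)
          · rw [if_pos (show m ∈ (A ∪ B) ∩ C from ⟨Or.inl hmA.1, hmA.2⟩), if_pos hmA,
              if_neg hmB]; ring
          · rw [if_pos (show m ∈ (A ∪ B) ∩ C from ⟨Or.inr hmB.1, hmB.2⟩), if_neg hmA,
              if_pos hmB]; ring
          · rw [if_neg (show m ∉ (A ∪ B) ∩ C from fun hc =>
              hc.1.elim (fun h => hmA ⟨h, hc.2⟩) (fun h => hmB ⟨h, hc.2⟩)), if_neg hmA,
              if_neg hmB]; ring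
  -- (C3)
  have hC3 : ∀ E ∈ 𝒜, ∀ Fx ∈ 𝒜, ∀ C ∈ 𝒜, C.Nonempty → (E ∩ C).Nonempty →
      chainP H σ ν (E ∩ Fx) C = chainP H σ ν E C * chainP H σ ν Fx (E ∩ C) := by
    intro E hE Fx hFx C hC hCne hECne
    have hECm : E ∩ C ∈ 𝒜 := sf_inter h𝒜 hE hC
    have hEFCm : (E ∩ Fx) ∩ C ∈ 𝒜 := sf_inter h𝒜 (sf_inter h𝒜 hE hFx) hC
    have hset : (E ∩ Fx) ∩ C = Fx ∩ (E ∩ C) := by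
      ext x; simp only [Set.mem_inter_iff]; tauto
    by_cases h1 : 0 < ν C
    · by_cases h1' : 0 < ν (E ∩ C)
      · rw [chainP_br1 (E ∩ Fx) C h1, chainP_br1 E C h1, chainP_br1 Fx (E ∩ C) h1', hset]
        field_simp
      · have h0 : ν (E ∩ C) = 0 := le_antisymm (not_lt.mp h1') (fap_nonneg hν hECm)
        have hsub : ν ((E ∩ Fx) ∩ C) = 0 := le_antisymm
          (by
            calc ν ((E ∩ Fx) ∩ C) ≤ ν (E ∩ C) := fap_mono h𝒜 hν hEFCm hECm
                  (by rw [hset]; exact Set.inter_subset_right)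
              _ = 0 := h0)
          (fap_nonneg hν hEFCm)
        rw [chainP_br1 (E ∩ Fx) C h1, chainP_br1 E C h1, hsub, h0]
        simp
    · have hνEC : ¬ 0 < ν (E ∩ C) := by
        have hle := fap_mono h𝒜 hν hECm hC Set.inter_subset_right
        have := not_lt.mp h1
        exact not_lt.mpr (le_trans hle this)
      by_cases h2 : ∃ i, ν (H i) = 0 ∧ 0 < σ C i
      · have hi₀ := wmin_mem {i | ν (H i) = 0 ∧ 0 < σ C i} h2
        set i₀ := wmin {i | ν (H i) = 0 ∧ 0 < σ C i} h2 with hi₀def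
        by_cases hp : 0 < σ (E ∩ C) i₀
        · have h2' : ∃ i, ν (H i) = 0 ∧ 0 < σ (E ∩ C) i := ⟨i₀, hi₀.1, hp⟩
          have hsame : wmin {i | ν (H i) = 0 ∧ 0 < σ (E ∩ C) i} h2' = i₀ := by
            apply wmin_eq _ _ (show i₀ ∈ {i | ν (H i) = 0 ∧ 0 < σ (E ∩ C) i} from ⟨hi₀.1, hp⟩)
            intro y hy
            have hyS : y ∈ {i | ν (H i) = 0 ∧ 0 < σ C i} :=
              ⟨hy.1, lt_of_lt_of_le hy.2 (fap_mono h𝒜 (hσ y).1 hECm hC Set.inter_subset_right)⟩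
            exact wmin_not_lt _ h2 hyS
          rw [chainP_br2 (E ∩ Fx) C h1 h2, chainP_br2 E C h1 h2,
            chainP_br2 Fx (E ∩ C) hνEC h2', hsame, ← hi₀def, hset]
          have hσ0 : σ C i₀ ≠ 0 := ne_of_gt hi₀.2
          have hσ1 : σ (E ∩ C) i₀ ≠ 0 := ne_of_gt hp
          field_simp
        · have hz : σ (E ∩ C) i₀ = 0 := le_antisymm (not_lt.mp hp) (fap_nonneg (hσ i₀).1 hECm)
          have hsub : σ ((E ∩ Fx) ∩ C) i₀ = 0 := le_antisymm
            (by
              calc σ ((E ∩ Fx) ∩ C) i₀ ≤ σ (E ∩ C) i₀ := fap_mono h𝒜 (hσ i₀).1 hEFCm hECm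
                    (by rw [hset]; exact Set.inter_subset_right)
                _ = 0 := hz)
            (fap_nonneg (hσ i₀).1 hEFCm)
          rw [chainP_br2 (E ∩ Fx) C h1 h2, chainP_br2 E C h1 h2, ← hi₀def, hsub, hz]
          simp
      · have h2' : ¬ ∃ i, ν (H i) = 0 ∧ 0 < σ (E ∩ C) i := by
          rintro ⟨i, hiν, hiσ⟩
          exact h2 ⟨i, hiν,
            lt_of_lt_of_le hiσ (fap_mono h𝒜 (hσ i).1 hECm hC Set.inter_subset_right)⟩
        rw [chainP_br3 (E ∩ Fx) C h1 h2 hCne, chainP_br3 E C h1 h2 hCne,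
          chainP_br3 Fx (E ∩ C) hνEC h2' hECne]
        set m := wmin C hCne with hmdef
        by_cases hm : m ∈ E ∩ C
        · have hmeq : wmin (E ∩ C) hECne = m :=
            wmin_eq _ _ hm (fun y hy => wmin_not_lt C hCne hy.2)
          rw [hmeq, if_pos hm]
          by_cases hmf : m ∈ (E ∩ Fx) ∩ C
          · rw [if_pos hmf, if_pos (show m ∈ Fx ∩ (E ∩ C) from ⟨hmf.1.2, hm⟩)]; ring
          · rw [if_neg hmf,
              if_neg (show m ∉ Fx ∩ (E ∩ C) from fun hc => hmf ⟨⟨hm.1, hc.1⟩, hm.2⟩)]; ring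
        · rw [if_neg hm, if_neg (show m ∉ (E ∩ Fx) ∩ C from fun hc => hm ⟨hc.1.1, hc.2⟩),
            zero_mul]
  refine ⟨⟨hC1, hC2, hC3⟩, ?_, ?_⟩
  · -- extends prior
    intro B hB
    have h1 : 0 < ν Set.univ := by rw [hν.2.1]; norm_num
    rw [chainP_br1 B Set.univ h1, Set.inter_univ, hν.2.1, div_one]
    exact hmarg B hB
  · -- extends strategy
    intro G hG i
    have hνHi : ν (H i) = π (H i) := hmarg _ (hFO.2.1 i)
    have hσHi : σ (H i) i = 1 := (hσ i).2 _ (hmemH i) subset_rfl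
    by_cases h1 : 0 < ν (H i)
    · rw [chainP_br1 G (H i) h1, hadapt G hG i, hνHi]
      have hπne : π (H i) ≠ 0 := by rw [← hνHi]; exact ne_of_gt h1
      field_simp
    · have hz : ν (H i) = 0 := le_antisymm (not_lt.mp h1) (fap_nonneg hν (hmemH i))
      have h2 : ∃ j, ν (H j) = 0 ∧ 0 < σ (H i) j := ⟨i, hz, by rw [hσHi]; norm_num⟩
      have hsame : wmin {j | ν (H j) = 0 ∧ 0 < σ (H i) j} h2 = i := by
        apply wmin_eq _ _ (show i ∈ {j | ν (H j) = 0 ∧ 0 < σ (H i) j} from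
          ⟨hz, by rw [hσHi]; norm_num⟩)
        intro y hy
        have hyi : y = i := by
          by_contra hne
          have hd : H i ∩ H y = ∅ := Set.eq_empty_iff_forall_notMem.mpr
            (fun x hx => (hH.2.1 (Ne.symm hne) : Disjoint (H i) (H y)).le_bot ⟨hx.1, hx.2⟩)
          have := strat_zero h𝒜 hσ hmemH (hmemH i) hd
          exact absurd this (ne_of_gt hy.2)
        rw [hyi]
        exact irrefl_of WellOrderingRel i
      rw [chainP_br2 G (H i) h1 h2, hsame, hσHi, div_one,
        strat_inter_self h𝒜 hσ hmemH hG i]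

end ChainP

section Members

variable [Nonempty Ω] {H : ι → Set Ω} {𝒜L 𝒜 : Set (Set Ω)} {π : Set Ω → ℝ}
  {σ : Set Ω → ι → ℝ}

lemma mem_props (hH : IsPartition H) (hFO : IsFieldOver H 𝒜L) (h𝒜 : IsSetField 𝒜)
    (hLsub : 𝒜L ⊆ 𝒜) {P : Set Ω → Set Ω → ℝ} (hP : P ∈ FCPSet 𝒜 𝒜L H π σ) :
    IsFAP 𝒜 (fun G => P G Set.univ) ∧ (∀ B ∈ 𝒜L, P B Set.univ = π B) ∧
      (∀ G ∈ 𝒜, ∀ i, P (G ∩ H i) Set.univ = π (H i) * σ G i) := by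
  obtain ⟨hfcp, hext⟩ := hP
  have hUnivNe : (Set.univ : Set Ω).Nonempty := Set.univ_nonempty
  refine ⟨hfcp.2.1 Set.univ h𝒜.1 hUnivNe, hext.1, ?_⟩
  intro G hG i
  have h3 := hfcp.2.2 (H i) (hLsub (hFO.2.1 i)) G hG Set.univ h𝒜.1 hUnivNe
    (by rw [Set.inter_univ]; exact hH.1 i)
  rw [Set.inter_univ] at h3
  rw [Set.inter_comm G (H i), h3, hext.2 G hG i, hext.1 (H i) (hFO.2.1 i)]

lemma mem_ratio (h𝒜 : IsSetField 𝒜) {P : Set Ω → Set Ω → ℝ}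
    (hP : P ∈ FCPSet 𝒜 𝒜L H π σ) {F K : Set Ω} (hF : F ∈ 𝒜) (hK : K ∈ 𝒜)
    (hKne : K.Nonempty) : P (F ∩ K) Set.univ = P K Set.univ * P F K := by
  obtain ⟨hfcp, hext⟩ := hP
  have h3 := hfcp.2.2 K hK F hF Set.univ h𝒜.1 Set.univ_nonempty
    (by rw [Set.inter_univ]; exact hKne)
  rw [Set.inter_univ] at h3
  rw [Set.inter_comm F K, h3]

end Members

end St3

end Statement3Aux

/-- closed form of `P_*(F|K)` when `P^j_*(K) > 0`. -/
theorem statement3 {Ω ι κ : Type*} [Nonempty Ω] (H : ι → Set Ω) (E : κ → Set Ω)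
    (𝒜L 𝒜E 𝒜 : Set (Set Ω))
    (hH : IsPartition H) (hE : IsPartition E)
    (h𝒜L : IsFieldOver H 𝒜L) (h𝒜E : IsFieldOver E 𝒜E)
    (h𝒜 : IsJointField H E 𝒜L 𝒜E 𝒜)
    (π : Set Ω → ℝ) (hπ : IsFAP 𝒜L π)
    (σ : Set Ω → ι → ℝ) (hσ : IsStrategy 𝒜 H σ)
    (F K : Set Ω) (hF : F ∈ 𝒜) (hK : K ∈ 𝒜) (hKne : K.Nonempty)
    (hFK : F ∩ K ≠ K)
    (hpos : 0 < lowEnv (FCPSet 𝒜 𝒜L H π σ) K Set.univ) :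
    lowEnv (FCPSet 𝒜 𝒜L H π σ) F K =
      min
        (lowEnv (FCPSet 𝒜 𝒜L H π σ) (F ∩ K) Set.univ /
          (lowEnv (FCPSet 𝒜 𝒜L H π σ) (F ∩ K) Set.univ + Uj (FCPSet 𝒜 𝒜L H π σ) Fᶜ K))
        (Lj (FCPSet 𝒜 𝒜L H π σ) F K /
          (Lj (FCPSet 𝒜 𝒜L H π σ) F K + upEnv (FCPSet 𝒜 𝒜L H π σ) (Fᶜ ∩ K) Set.univ)) := by
    classical
  have hAf : IsSetField 𝒜 := h𝒜.1
  have hLsub : 𝒜L ⊆ 𝒜 := h𝒜.2.1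
  haveI hne : Nonempty (St3.Stg H 𝒜L) := St3.stg_nonempty h𝒜L.1
  haveI hdir : IsDirected (St3.Stg H 𝒜L) (· ≤ ·) := St3.stg_directed h𝒜L.1
  haveI hnb : (Filter.atTop : Filter (St3.Stg H 𝒜L)).NeBot := Filter.atTop_neBot
  set 𝓤 : Ultrafilter (St3.Stg H 𝒜L) := Ultrafilter.of Filter.atTop with h𝓤def
  have h𝓤 : ↑𝓤 ≤ (Filter.atTop : Filter (St3.Stg H 𝒜L)) := Ultrafilter.of_le _
  set ν : Set Ω → ℝ := St3.nulim H π σ F K 𝓤 with hνdef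
  have hνfap : IsFAP 𝒜 ν := St3.nulim_fap hH h𝒜L hπ hAf hLsub hσ
  have hνmarg : ∀ B ∈ 𝒜L, ν B = π B := fun B hB =>
    St3.nulim_marg hH h𝒜L hπ hAf hLsub hσ h𝓤 hB
  have hνadapt : ∀ G ∈ 𝒜, ∀ i, ν (G ∩ H i) = π (H i) * σ G i := fun G hG i =>
    St3.nulim_adapt hH h𝒜L hπ hAf hLsub hσ h𝓤 hG i
  set Pν : Set Ω → Set Ω → ℝ := St3.chainP H σ ν with hPνdef
  set Ps := FCPSet 𝒜 𝒜L H π σ with hPsdef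
  have hPνPs : Pν ∈ Ps :=
    St3.chainP_mem hH h𝒜L hπ hAf hLsub hσ hνfap hνmarg hνadapt
  have hFK𝒜 : F ∩ K ∈ 𝒜 := St3.sf_inter hAf hF hK
  have hFcK𝒜 : Fᶜ ∩ K ∈ 𝒜 := St3.sf_inter hAf (hAf.2.1 F hF) hK
  have hν_univ_pos : (0 : ℝ) < ν Set.univ := by rw [hνfap.2.1]; norm_num
  have hPν_joint : ∀ G : Set Ω, Pν G Set.univ = ν G := by
    intro G
    rw [hPνdef, St3.chainP_br1 G Set.univ hν_univ_pos, Set.inter_univ, hνfap.2.1, div_one]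
  have hmemb : ∀ P ∈ Ps,
      ν (F ∩ K) ≤ P (F ∩ K) Set.univ ∧ P (Fᶜ ∩ K) Set.univ ≤ ν (Fᶜ ∩ K) := by
    intro P hP
    obtain ⟨hPfap, hPmarg, hPadapt⟩ := St3.mem_props hH h𝒜L hAf hLsub hP
    exact ⟨St3.nulim_FK_le (𝓤 := 𝓤) hH h𝒜L hπ hAf hLsub hσ hPfap hPmarg hPadapt hFK𝒜,
      St3.nulim_FcK_ge (𝓤 := 𝓤) hH h𝒜L hπ hAf hLsub hσ hPfap hPmarg hPadapt hFcK𝒜⟩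
  have hUnivNe : (Set.univ : Set Ω).Nonempty := Set.univ_nonempty
  have hUniv𝒜 : (Set.univ : Set Ω) ∈ 𝒜 := hAf.1
  have hval01 : ∀ P ∈ Ps, ∀ G ∈ 𝒜, ∀ C ∈ 𝒜, C.Nonempty →
      0 ≤ P G C ∧ P G C ≤ 1 := by
    intro P hP G hG C hC hCne
    exact (hP.1.2.1 C hC hCne).1 G hG
  have hKsplit : (F ∩ K) ∪ (Fᶜ ∩ K) = K := by
    ext x
    by_cases hx : x ∈ F <;> simp [hx]
  have hKdisj : Disjoint (F ∩ K) (Fᶜ ∩ K) :=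
    Set.disjoint_left.mpr fun x hx hx' => hx'.1 hx.1
  have hνK : ν K = ν (F ∩ K) + ν (Fᶜ ∩ K) := by
    have h := hνfap.2.2 _ hFK𝒜 _ hFcK𝒜 hKdisj
    rw [hKsplit] at h
    exact h
  have hbdd0 : ∀ G : Set Ω, G ∈ 𝒜 → BddBelow ((fun P => P G Set.univ) '' Ps) := by
    intro G hG
    refine ⟨0, ?_⟩
    rintro x ⟨P, hP, rfl⟩
    exact (hval01 P hP G hG Set.univ hUniv𝒜 hUnivNe).1
  have hbdd1 : ∀ G : Set Ω, G ∈ 𝒜 → BddAbove ((fun P => P G Set.univ) '' Ps) := by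
    intro G hG
    refine ⟨1, ?_⟩
    rintro x ⟨P, hP, rfl⟩
    exact (hval01 P hP G hG Set.univ hUniv𝒜 hUnivNe).2
  have hlowK_le : lowEnv Ps K Set.univ ≤ ν K := by
    have h1 : lowEnv Ps K Set.univ ≤ Pν K Set.univ :=
      csInf_le (hbdd0 K hK) ⟨Pν, hPνPs, rfl⟩
    rwa [hPν_joint K] at h1
  have habpos : 0 < ν (F ∩ K) + ν (Fᶜ ∩ K) := by
    rw [← hνK]
    exact lt_of_lt_of_le hpos hlowK_le
  have ha : lowEnv Ps (F ∩ K) Set.univ = ν (F ∩ K) := by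
    apply le_antisymm
    · have h1 : lowEnv Ps (F ∩ K) Set.univ ≤ Pν (F ∩ K) Set.univ :=
        csInf_le (hbdd0 _ hFK𝒜) ⟨Pν, hPνPs, rfl⟩
      rwa [hPν_joint] at h1
    · have hne' : ((fun P => P (F ∩ K) Set.univ) '' Ps).Nonempty :=
        ⟨Pν (F ∩ K) Set.univ, Pν, hPνPs, rfl⟩
      apply le_csInf hne'
      rintro x ⟨P, hP, rfl⟩
      exact (hmemb P hP).1
  have hb : upEnv Ps (Fᶜ ∩ K) Set.univ = ν (Fᶜ ∩ K) := by
    apply le_antisymm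
    · have hne' : ((fun P => P (Fᶜ ∩ K) Set.univ) '' Ps).Nonempty :=
        ⟨Pν (Fᶜ ∩ K) Set.univ, Pν, hPνPs, rfl⟩
      apply csSup_le hne'
      rintro x ⟨P, hP, rfl⟩
      exact (hmemb P hP).2
    · have h1 : Pν (Fᶜ ∩ K) Set.univ ≤ upEnv Ps (Fᶜ ∩ K) Set.univ :=
        le_csSup (hbdd1 _ hFcK𝒜) ⟨Pν, hPνPs, rfl⟩
      rwa [hPν_joint] at h1
  have hUj : Uj Ps Fᶜ K = ν (Fᶜ ∩ K) := by
    unfold Uj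
    rw [compl_compl]
    apply le_antisymm
    · have hne' : {x | ∃ P ∈ Ps, P (F ∩ K) Set.univ = lowEnv Ps (F ∩ K) Set.univ ∧
          x = P (Fᶜ ∩ K) Set.univ}.Nonempty :=
        ⟨ν (Fᶜ ∩ K), Pν, hPνPs, by rw [hPν_joint, ha], (hPν_joint _).symm⟩
      apply csSup_le hne'
      rintro x ⟨P, hP, _, rfl⟩
      calc P (Fᶜ ∩ K) Set.univ ≤ upEnv Ps (Fᶜ ∩ K) Set.univ :=
            le_csSup (hbdd1 _ hFcK𝒜) ⟨P, hP, rfl⟩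
        _ = ν (Fᶜ ∩ K) := hb
    · apply le_csSup
      · refine ⟨ν (Fᶜ ∩ K), ?_⟩
        rintro x ⟨P, hP, _, rfl⟩
        exact (hmemb P hP).2
      · exact ⟨Pν, hPνPs, by rw [hPν_joint, ha], (hPν_joint _).symm⟩
  have hLj : Lj Ps F K = ν (F ∩ K) := by
    unfold Lj
    apply le_antisymm
    · apply csInf_le
      · refine ⟨ν (F ∩ K), ?_⟩
        rintro x ⟨P, hP, _, rfl⟩
        exact (hmemb P hP).1
      · exact ⟨Pν, hPνPs, by rw [hPν_joint, hb], (hPν_joint _).symm⟩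
    · have hne' : {x | ∃ P ∈ Ps, P (Fᶜ ∩ K) Set.univ = upEnv Ps (Fᶜ ∩ K) Set.univ ∧
          x = P (F ∩ K) Set.univ}.Nonempty :=
        ⟨ν (F ∩ K), Pν, hPνPs, by rw [hPν_joint, hb], (hPν_joint _).symm⟩
      apply le_csInf hne'
      rintro x ⟨P, hP, _, rfl⟩
      exact (hmemb P hP).1
  rw [ha, hUj, hLj, hb, min_self]
  have hνKpos : 0 < ν K := by rw [hνK]; exact habpos
  have hKpos : ∀ P ∈ Ps, 0 < P K Set.univ := fun P hP =>
    lt_of_lt_of_le hpos (csInf_le (hbdd0 K hK) ⟨P, hP, rfl⟩)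
  have hbddFK : BddBelow ((fun P => P F K) '' Ps) := by
    refine ⟨0, ?_⟩
    rintro x ⟨P, hP, rfl⟩
    exact (hval01 P hP F hF K hK hKne).1
  apply le_antisymm
  · have h1 : lowEnv Ps F K ≤ Pν F K := csInf_le hbddFK ⟨Pν, hPνPs, rfl⟩
    have h2 : Pν F K = ν (F ∩ K) / (ν (F ∩ K) + ν (Fᶜ ∩ K)) := by
      rw [hPνdef, St3.chainP_br1 F K hνKpos, hνK]
    rwa [h2] at h1
  · have hne' : ((fun P => P F K) '' Ps).Nonempty := ⟨Pν F K, Pν, hPνPs, rfl⟩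
    apply le_csInf hne'
    rintro x ⟨P, hP, rfl⟩
    have hx : ν (F ∩ K) ≤ P (F ∩ K) Set.univ := (hmemb P hP).1
    have hy : P (Fᶜ ∩ K) Set.univ ≤ ν (Fᶜ ∩ K) := (hmemb P hP).2
    have hx0 : 0 ≤ P (F ∩ K) Set.univ :=
      (hval01 P hP _ hFK𝒜 _ hUniv𝒜 hUnivNe).1
    have hy0 : 0 ≤ P (Fᶜ ∩ K) Set.univ :=
      (hval01 P hP _ hFcK𝒜 _ hUniv𝒜 hUnivNe).1
    have hPK : P K Set.univ = P (F ∩ K) Set.univ + P (Fᶜ ∩ K) Set.univ := by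
      have h := (hP.1.2.1 Set.univ hUniv𝒜 hUnivNe).2.2 (F ∩ K) hFK𝒜 (Fᶜ ∩ K) hFcK𝒜 hKdisj
      rw [hKsplit] at h
      exact h
    have hxy : 0 < P (F ∩ K) Set.univ + P (Fᶜ ∩ K) Set.univ := by
      rw [← hPK]
      exact hKpos P hP
    have hratio : P (F ∩ K) Set.univ = P K Set.univ * P F K :=
      St3.mem_ratio hAf hP hF hK hKne
    have hPFK : P F K = P (F ∩ K) Set.univ / (P (F ∩ K) Set.univ + P (Fᶜ ∩ K) Set.univ) := by
      rw [hPK] at hratio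
      rw [eq_div_iff (ne_of_gt hxy)]
      linarith [hratio]
    show ν (F ∩ K) / (ν (F ∩ K) + ν (Fᶜ ∩ K)) ≤ P F K
    rw [hPFK, div_le_div_iff₀ habpos hxy]
    have hay : ν (F ∩ K) * P (Fᶜ ∩ K) Set.univ ≤ P (F ∩ K) Set.univ * ν (Fᶜ ∩ K) := by
      calc ν (F ∩ K) * P (Fᶜ ∩ K) Set.univ ≤ P (F ∩ K) Set.univ * P (Fᶜ ∩ K) Set.univ :=
            mul_le_mul_of_nonneg_right hx hy0
        _ ≤ P (F ∩ K) Set.univ * ν (Fᶜ ∩ K) := mul_le_mul_of_nonneg_left hy hx0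
    nlinarith [hay]
end
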